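/- arXiv:2103.08529 — 9 statements merged into one kernel-verified Lean document; each statement's English description precedes it below -/
import Mathlib

section
/- Let α ≥ 1 and let f(x) = x + η·(1/(4x) − α) for x > 0. For any η ∈ [3/(4α²), 1/α²), the interval I(η) = [L(η), U(η)], where L(η) = √η·(1 − α√η) and U(η) = (√η/(4(1 − α√η)))·(5 − 12α√η + 8α²η), is invariant under f, i.e. f(I(η)) ⊆ I(η); moreover the fixed point x* = 1/(4α) of f belongs to I(η). -/
/-- The interval `I(η) = [L(η), U(η)]` is invariant under
`f x = x + η·(1/(4x) − α)` for `η ∈ [3/(4α²), 1/α²)`, and the fixed point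
`x* = 1/(4α)` belongs to `I(η)`. -/
theorem invariant_interval
    (α η : ℝ) (hα : 1 ≤ α)
    (hη₁ : 3 / (4 * α ^ 2) ≤ η) (hη₂ : η < 1 / α ^ 2)
    (f : ℝ → ℝ) (hf : ∀ x : ℝ, f x = x + η * (1 / (4 * x) - α))
    (L U : ℝ)
    (hL : L = Real.sqrt η * (1 - α * Real.sqrt η))
    (hU : U = Real.sqrt η / (4 * (1 - α * Real.sqrt η)) *
      (5 - 12 * α * Real.sqrt η + 8 * α ^ 2 * η)) :
    Set.MapsTo f (Set.Icc L U) (Set.Icc L U) ∧ 1 / (4 * α) ∈ Set.Icc L U := by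
  have hα0 : (0:ℝ) < α := by linarith
  have hη0 : 0 < η := lt_of_lt_of_le (by positivity) hη₁
  obtain ⟨s, hs0, rfl⟩ : ∃ s : ℝ, 0 < s ∧ η = s ^ 2 :=
    ⟨Real.sqrt η, Real.sqrt_pos.mpr hη0, (Real.sq_sqrt hη0.le).symm⟩
  have hss : Real.sqrt (s ^ 2) = s := Real.sqrt_sq hs0.le
  rw [hss] at hL hU
  -- basic bounds on t = α * s
  have h34 : 3 / 4 ≤ (α * s) ^ 2 := by
    rw [div_le_iff₀ (by positivity)] at hη₁
    nlinarith
  have hlt1 : α * s < 1 := by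
    rw [lt_div_iff₀ (by positivity)] at hη₂
    nlinarith [mul_pos hα0 hs0]
  have h12 : 1 / 2 < α * s := by nlinarith [mul_pos hα0 hs0]
  have h1t : 0 < 1 - α * s := by linarith
  have hL0 : 0 < L := by rw [hL]; exact mul_pos hs0 h1t
  have hUval : U * (4 * (1 - α * s)) = s * (5 - 12 * α * s + 8 * α ^ 2 * s ^ 2) := by
    rw [hU]; field_simp
    exact mul_div_cancel_left₀ _ (ne_of_gt (by linarith [mul_comm s α]))
  have hId : 4 * L * (U + α * s ^ 2 - L) = s ^ 2 := by
    rw [hL]; linear_combination s * hUval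
  have hLae : L ≤ α * s ^ 2 := by rw [hL]; nlinarith
  have hLle : L ≤ 1 / (4 * α) := by
    rw [hL, le_div_iff₀ (by positivity)]
    nlinarith [sq_nonneg (2 * α * s - 1)]
  have hUge : 1 / (4 * α) ≤ U := by
    rw [div_le_iff₀ (by positivity)]
    have hcube : 0 ≤ (2 * α * s - 1) ^ 3 := pow_nonneg (by linarith) 3
    have hUval' : U * (4 * α) * (1 - α * s)
        = α * s * (5 - 12 * α * s + 8 * α ^ 2 * s ^ 2) := by
      linear_combination α * hUval
    nlinarith [hcube, hUval', h1t]
  refine ⟨?_, hLle, hUge⟩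
  intro x hx
  rw [Set.mem_Icc] at hx ⊢
  obtain ⟨hx1, hx2⟩ := hx
  have hx0 : 0 < x := lt_of_lt_of_le hL0 hx1
  have hfx : f x * (4 * x) = 4 * x ^ 2 + s ^ 2 - 4 * (α * s ^ 2) * x := by
    rw [hf]; field_simp; ring
  constructor
  · have key : L * (4 * x) ≤ f x * (4 * x) := by
      have hexp : 4 * x ^ 2 + s ^ 2 - 4 * (α * s ^ 2) * x - s * (1 - α * s) * (4 * x)
          = (2 * x - s) ^ 2 := by ring
      rw [hfx, hL]
      linarith [sq_nonneg (2 * x - s), hexp]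
    exact le_of_mul_le_mul_right key (by positivity)
  · have hprod : 0 ≤ (x - L) * (U + α * s ^ 2 - L - x) :=
      mul_nonneg (by linarith) (by linarith)
    have key : f x * (4 * x) ≤ U * (4 * x) := by
      have hexp : U * (4 * x) - (4 * x ^ 2 + s ^ 2 - 4 * (α * s ^ 2) * x)
          = 4 * ((x - L) * (U + α * s ^ 2 - L - x)) + (4 * L * (U + α * s ^ 2 - L) - s ^ 2) := by
        ring
      rw [hfx]
      linarith [hprod, hId, hexp]
    exact le_of_mul_le_mul_right key (by positivity)
end

section
/- Let α ≥ 1 and η ∈ [3/(4α²), 1/α²). Then the strict inequality chain L(η) < 1/(4α) < √η/2 < U(η) holds, where L(η) = √η·(1 − α√η) and U(η) = (√η/(4(1 − α√η)))·(5 − 12α√η + 8α²η). -/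
/-- For `α ≥ 1` and `η ∈ [3/(4α²), 1/α²)` the strict chain
`L(η) < 1/(4α) < √η/2 < U(η)` holds. -/
theorem strict_inequality_chain
    (α η : ℝ) (hα : 1 ≤ α)
    (hη₁ : 3 / (4 * α ^ 2) ≤ η) (hη₂ : η < 1 / α ^ 2)
    (L U : ℝ)
    (hL : L = Real.sqrt η * (1 - α * Real.sqrt η))
    (hU : U = Real.sqrt η / (4 * (1 - α * Real.sqrt η)) *
      (5 - 12 * α * Real.sqrt η + 8 * α ^ 2 * η)) :
    L < 1 / (4 * α) ∧ 1 / (4 * α) < Real.sqrt η / 2 ∧ Real.sqrt η / 2 < U := by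
  have hα0 : (0:ℝ) < α := by linarith
  have hη0 : 0 < η := by
    have : 0 < 3 / (4 * α ^ 2) := by positivity
    linarith
  set s := Real.sqrt η with hsdef
  have hs0 : 0 < s := Real.sqrt_pos.mpr hη0
  have hs2 : s ^ 2 = η := Real.sq_sqrt hη0.le
  have ht1 : α * s < 1 := by
    have h1 : s < 1 / α := by
      rw [hsdef]
      rw [show (1:ℝ)/α = Real.sqrt ((1/α)^2) by
        rw [Real.sqrt_sq (by positivity)]]
      exact Real.sqrt_lt_sqrt hη0.le (by  rw [div_pow]; simpa using hη₂)
    calc α * s < α * (1/α) := by exact (mul_lt_mul_iff_right₀ hα0).mpr h1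
    _ = 1 := by field_simp
  have ht2 : 3 / 4 ≤ (α * s) ^ 2 := by
    have : 3 / (4 * α ^ 2) * α ^ 2 ≤ η * α ^ 2 := by nlinarith
    have h3 : 3 / (4 * α ^ 2) * α ^ 2 = 3 / 4 := by field_simp
    nlinarith
  have hts : 0 < α * s := by positivity
  have ht3 : 3 / 4 < α * s := by nlinarith
  refine ⟨?_, ?_, ?_⟩
  · rw [hL]
    rw [div_eq_inv_mul, lt_inv_mul_iff₀ (by positivity)]
    nlinarith [sq_nonneg (2 * (α * s) - 1)]
  · rw [div_lt_div_iff₀ (by positivity) (by norm_num)]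
    nlinarith
  · rw [hU]
    have hden : 0 < 4 * (1 - α * s) := by linarith
    rw [div_mul_eq_mul_div, lt_div_iff₀ hden]
    nlinarith [mul_pos hs0 (mul_pos (show (0:ℝ) < 4 * (α * s) - 3 by linarith) (show (0:ℝ) < 2 * (α * s) - 1 by linarith)), hs2]
end

section
/- Let α ≥ 1 and η ∈ [3/(4α²), 1/α²), and let f(x) = x + η·(1/(4x) − α). Then f(U(η)) < U(η), where U(η) = (√η/(4(1 − α√η)))·(5 − 12α√η + 8α²η). -/
/-- For `α ≥ 1` and `η ∈ [3/(4α²), 1/α²)` one has `f(U(η)) < U(η)`, where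
`f x = x + η·(1/(4x) − α)`. -/
theorem f_U_lt_U
    (α η : ℝ) (hα : 1 ≤ α)
    (hη₁ : 3 / (4 * α ^ 2) ≤ η) (hη₂ : η < 1 / α ^ 2)
    (f : ℝ → ℝ) (hf : ∀ x : ℝ, f x = x + η * (1 / (4 * x) - α))
    (U : ℝ)
    (hU : U = Real.sqrt η / (4 * (1 - α * Real.sqrt η)) *
      (5 - 12 * α * Real.sqrt η + 8 * α ^ 2 * η)) :
    f U < U := by
  have hα0 : 0 < α := by linarith
  have hη0 : 0 < η := lt_of_lt_of_le (by positivity) hη₁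
  set s := Real.sqrt η with hsdef
  have hs : s ^ 2 = η := Real.sq_sqrt hη0.le
  have hs0 : 0 < s := Real.sqrt_pos.mpr hη0
  have hα2 : 0 < α ^ 2 := by positivity
  have ht2 : 3 / 4 ≤ (α * s) ^ 2 := by
    have : 3 / (4 * α ^ 2) * α ^ 2 ≤ η * α ^ 2 := by nlinarith
    have h3 : 3 / (4 * α ^ 2) * α ^ 2 = 3 / 4 := by field_simp
    nlinarith
  have ht1 : α * s < 1 := by
    have : η * α ^ 2 < 1 / α ^ 2 * α ^ 2 := by nlinarith
    have h1 : 1 / α ^ 2 * α ^ 2 = 1 := by field_simp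
    nlinarith [mul_pos hα0 hs0]
  have htl : 1 / 2 < α * s := by nlinarith [mul_pos hα0 hs0]
  have hden : 0 < 1 - α * s := by linarith
  have key : 1 - α * s < α * s * (5 - 12 * α * s + 8 * α ^ 2 * s ^ 2) := by
    nlinarith [pow_pos (by linarith : (0:ℝ) < 2 * α * s - 1) 3]
  have h4U : 1 < 4 * α * U := by
    rw [hU]
    rw [show (4:ℝ) * α * (s / (4 * (1 - α * s)) * (5 - 12 * α * s + 8 * α ^ 2 * η))
        = (α * s * (5 - 12 * α * s + 8 * α ^ 2 * η)) / (1 - α * s) from by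
      field_simp]
    rw [lt_div_iff₀ hden]
    nlinarith [key, hs]
  have hU0 : 0 < U := by nlinarith
  have hinv : 1 / (4 * U) < α := by
    rw [div_lt_iff₀ (by positivity)]
    nlinarith
  rw [hf]
  nlinarith [mul_neg_of_pos_of_neg hη0 (by linarith : 1 / (4 * U) - α < 0)]
end

section
/- Consider a quasi-linear Fisher market with n firms and m goods, budgets K_i > 0 and valuations v_{ij} > 0. Let b⁰ be any spending matrix with all entries strictly positive and ∑_j b⁰_{ij} ≤ K_i for all i, and define the PR-QLIN iterates: y^t_{ij} = b^t_{ij}/p_j(b^t), S^t_i = ∑_j v_{ij}·y^t_{ij}, and b^{t+1}_{ij} = v_{ij}·y^t_{ij}·min(1, K_i/S^t_i). Then for every minimizer b* of F over C and every integer t ≥ 1, F(b^t) − F(b*) ≤ KL(b*‖b⁰)/t; in particular F(b^t) converges to min_{b∈C} F(b), and the iterates converge to the set of market equilibrium spending vectors, i.e. the set of minimizers of F over C. -/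
open Real Finset

noncomputable def Dh (x y : ℝ) : ℝ := x * Real.log (x / y) - x + y

lemma Dh_nonneg {x y : ℝ} (hx : 0 ≤ x) (hy : 0 < y) : 0 ≤ Dh x y := by
  rcases eq_or_lt_of_le hx with h | h
  · simp [Dh, ← h]; linarith
  · have h1 : 1 - (x / y)⁻¹ ≤ Real.log (x / y) :=
      Real.one_sub_inv_le_log_of_pos (div_pos h hy)
    have h2 : x * (1 - (x / y)⁻¹) ≤ x * Real.log (x / y) :=
      mul_le_mul_of_nonneg_left h1 h.le
    have h3 : x * (1 - (x / y)⁻¹) = x - y := by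
      rw [inv_div]; field_simp
    unfold Dh; linarith
  
lemma h_expand {x y : ℝ} (hx : 0 ≤ x) (hy : 0 < y) :
    x * Real.log x - x - (y * Real.log y - y) = (x - y) * Real.log y + Dh x y := by
  rcases eq_or_lt_of_le hx with h | h
  · simp [Dh, ← h]; ring
  · unfold Dh; rw [Real.log_div h.ne' hy.ne']; ring

lemma fourpt {u x y : ℝ} (hu : 0 ≤ u) (hx : 0 < x) (hy : 0 < y) :
    u * Real.log (u / y) - u * Real.log (u / x) - x * Real.log (x / y)
      = (u - x) * (Real.log x - Real.log y) := by
  rcases eq_or_lt_of_le hu with h | h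
  · rw [← h]; rw [Real.log_div hx.ne' hy.ne']; ring
  · rw [Real.log_div h.ne' hy.ne', Real.log_div h.ne' hx.ne',
      Real.log_div hx.ne' hy.ne']; ring

lemma logsum {n : ℕ} [Nonempty (Fin n)] (x y : Fin n → ℝ)
    (hx : ∀ i, 0 < x i) (hy : ∀ i, 0 < y i) :
    (∑ i, x i) * Real.log ((∑ i, x i) / (∑ i, y i)) ≤ ∑ i, x i * Real.log (x i / y i) := by
  set X := ∑ i, x i with hX
  set Y := ∑ i, y i with hY
  have hXpos : 0 < X := Finset.sum_pos (fun i _ => hx i) univ_nonempty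
  have hYpos : 0 < Y := Finset.sum_pos (fun i _ => hy i) univ_nonempty
  have key : ∀ i, x i - y i * X / Y ≤ x i * Real.log (x i / y i) - x i * Real.log (X / Y) := by
    intro i
    have hxne := (hx i).ne'
    have hyne := (hy i).ne'
    have hXne := hXpos.ne'
    have hYne := hYpos.ne'
    have hz : 0 < (x i / y i) / (X / Y) :=
      div_pos (div_pos (hx i) (hy i)) (div_pos hXpos hYpos)
    have h1 : 1 - ((x i / y i) / (X / Y))⁻¹ ≤ Real.log ((x i / y i) / (X / Y)) :=
      Real.one_sub_inv_le_log_of_pos hz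
    have h2 : Real.log ((x i / y i) / (X / Y)) = Real.log (x i / y i) - Real.log (X / Y) :=
      Real.log_div (div_pos (hx i) (hy i)).ne' (div_pos hXpos hYpos).ne'
    have h3 : x i * (1 - ((x i / y i) / (X / Y))⁻¹) = x i - y i * X / Y := by
      field_simp
    calc x i - y i * X / Y = x i * (1 - ((x i / y i) / (X / Y))⁻¹) := h3.symm
      _ ≤ x i * Real.log ((x i / y i) / (X / Y)) :=
          mul_le_mul_of_nonneg_left h1 (hx i).le
      _ = x i * Real.log (x i / y i) - x i * Real.log (X / Y) := by rw [h2]; ring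
  have hsum := Finset.sum_le_sum (fun i (_ : i ∈ univ) => key i)
  have e1 : ∑ i, (x i - y i * X / Y) = 0 := by
    rw [Finset.sum_sub_distrib]
    have : ∑ i, y i * X / Y = X := by
      rw [← Finset.sum_div, ← Finset.sum_mul, ← hY]
      field_simp
    rw [this, ← hX]; ring
  have e2 : ∑ i, x i * Real.log (X / Y) = X * Real.log (X / Y) := by
    rw [← Finset.sum_mul]
  rw [e1, Finset.sum_sub_distrib, e2] at hsum
  linarith

noncomputable def Fc {n m : ℕ} (K : Fin n → ℝ) (v : Fin n → Fin m → ℝ)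
    (a : Fin n → Fin m → ℝ) : ℝ :=
  -(∑ i, ∑ j, a i j * Real.log (v i j)) + (∑ i, (K i - ∑ j, a i j)) +
    ∑ j, (∑ i, a i j) * Real.log (∑ i, a i j)

noncomputable def KLc {n m : ℕ} (u w : Fin n → Fin m → ℝ) : ℝ :=
  (∑ i, ∑ j, u i j * Real.log (u i j / w i j)) - (∑ i, ∑ j, u i j) + ∑ i, ∑ j, w i j

lemma Fc_eq {n m : ℕ} (K : Fin n → ℝ) (v : Fin n → Fin m → ℝ) (a : Fin n → Fin m → ℝ) :
    Fc K v a = (∑ i, K i) - (∑ i, ∑ j, a i j * Real.log (v i j)) +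
      ∑ j, ((∑ i, a i j) * Real.log (∑ i, a i j) - (∑ i, a i j)) := by
  unfold Fc
  rw [Finset.sum_sub_distrib, Finset.sum_sub_distrib,
    Finset.sum_comm (f := fun i j => a i j)]
  ring

lemma KLc_nonneg {n m : ℕ} {u w : Fin n → Fin m → ℝ}
    (hu : ∀ i j, 0 ≤ u i j) (hw : ∀ i j, 0 < w i j) : 0 ≤ KLc u w := by
  have : KLc u w = ∑ i, ∑ j, Dh (u i j) (w i j) := by
    unfold KLc Dh
    rw [← Finset.sum_sub_distrib, ← Finset.sum_add_distrib]
    refine Finset.sum_congr rfl fun i _ => ?_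
    rw [← Finset.sum_sub_distrib, ← Finset.sum_add_distrib]
  rw [this]
  exact Finset.sum_nonneg fun i _ => Finset.sum_nonneg fun j _ => Dh_nonneg (hu i j) (hw i j)

lemma KLc_self {n m : ℕ} {w : Fin n → Fin m → ℝ} (hw : ∀ i j, 0 < w i j) :
    KLc w w = 0 := by
  unfold KLc
  have : ∀ i j, w i j * Real.log (w i j / w i j) = 0 := by
    intro i j
    rw [div_self (hw i j).ne', Real.log_one, mul_zero]
  simp only [this]
  simp

lemma F_expand {n m : ℕ} [Nonempty (Fin n)] (K : Fin n → ℝ) (v : Fin n → Fin m → ℝ)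
    (a β : Fin n → Fin m → ℝ) (ha : ∀ i j, 0 ≤ a i j) (hβ : ∀ i j, 0 < β i j) :
    Fc K v a - Fc K v β =
      (∑ i, ∑ j, (a i j - β i j) * (Real.log (∑ i', β i' j) - Real.log (v i j)))
      + ∑ j, Dh (∑ i, a i j) (∑ i, β i j) := by
  have hq : ∀ j, 0 < ∑ i, β i j :=
    fun j => Finset.sum_pos (fun i _ => hβ i j) Finset.univ_nonempty
  have ha' : ∀ j, 0 ≤ ∑ i, a i j :=
    fun j => Finset.sum_nonneg fun i _ => ha i j
  have e1 : ∀ i j, (a i j - β i j) * (Real.log (∑ i', β i' j) - Real.log (v i j))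
      = (a i j * Real.log (∑ i', β i' j) - β i j * Real.log (∑ i', β i' j))
        - (a i j * Real.log (v i j) - β i j * Real.log (v i j)) := by
    intro i j; ring
  simp only [e1]
  rw [Fc_eq, Fc_eq]
  have e2a : ∑ i, ∑ j, ((a i j * Real.log (∑ i', β i' j) - β i j * Real.log (∑ i', β i' j))
        - (a i j * Real.log (v i j) - β i j * Real.log (v i j)))
      = (∑ i, ∑ j, (a i j * Real.log (∑ i', β i' j) - β i j * Real.log (∑ i', β i' j)))
        - ∑ i, ∑ j, (a i j * Real.log (v i j) - β i j * Real.log (v i j)) := by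
    simp [Finset.sum_sub_distrib]
  have e2b : (∑ i, ∑ j, (a i j * Real.log (∑ i', β i' j) - β i j * Real.log (∑ i', β i' j)))
      = ∑ j, ((∑ i, a i j) - (∑ i, β i j)) * Real.log (∑ i, β i j) := by
    rw [Finset.sum_comm]
    refine Finset.sum_congr rfl fun j _ => ?_
    rw [Finset.sum_sub_distrib, ← Finset.sum_mul, ← Finset.sum_mul, ← sub_mul]
  have e2c : (∑ i, ∑ j, (a i j * Real.log (v i j) - β i j * Real.log (v i j)))
      = (∑ i, ∑ j, a i j * Real.log (v i j)) - ∑ i, ∑ j, β i j * Real.log (v i j) := by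
    simp [Finset.sum_sub_distrib]
  rw [e2a, e2b, e2c]
  have e3 : (∑ j, ((∑ i, a i j) * Real.log (∑ i, a i j) - (∑ i, a i j)))
      - ∑ j, ((∑ i, β i j) * Real.log (∑ i, β i j) - (∑ i, β i j))
      = (∑ j, ((∑ i, a i j) - (∑ i, β i j)) * Real.log (∑ i, β i j))
        + ∑ j, Dh (∑ i, a i j) (∑ i, β i j) := by
    rw [← Finset.sum_sub_distrib, ← Finset.sum_add_distrib]
    exact Finset.sum_congr rfl fun j _ => h_expand (ha' j) (hq j)
  linarith [e3]

lemma threept {n m : ℕ} (u x y : Fin n → Fin m → ℝ) (hu : ∀ i j, 0 ≤ u i j)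
    (hx : ∀ i j, 0 < x i j) (hy : ∀ i j, 0 < y i j) :
    KLc u y - KLc u x - KLc x y
      = ∑ i, ∑ j, (u i j - x i j) * (Real.log (x i j) - Real.log (y i j)) := by
  have per : ∀ i j, u i j * Real.log (u i j / y i j) - u i j * Real.log (u i j / x i j)
      - x i j * Real.log (x i j / y i j)
      = (u i j - x i j) * (Real.log (x i j) - Real.log (y i j)) :=
    fun i j => fourpt (hu i j) (hx i j) (hy i j)
  have split : ∑ i, ∑ j, (u i j * Real.log (u i j / y i j) - u i j * Real.log (u i j / x i j)
      - x i j * Real.log (x i j / y i j))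
      = (∑ i, ∑ j, u i j * Real.log (u i j / y i j))
        - (∑ i, ∑ j, u i j * Real.log (u i j / x i j))
        - ∑ i, ∑ j, x i j * Real.log (x i j / y i j) := by
    simp [Finset.sum_sub_distrib]
  have congrstep : ∑ i, ∑ j, (u i j * Real.log (u i j / y i j)
      - u i j * Real.log (u i j / x i j) - x i j * Real.log (x i j / y i j))
      = ∑ i, ∑ j, (u i j - x i j) * (Real.log (x i j) - Real.log (y i j)) :=
    Finset.sum_congr rfl fun i _ => Finset.sum_congr rfl fun j _ => per i j
  unfold KLc
  linarith [split, congrstep]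

lemma onestep {n m : ℕ} [Nonempty (Fin n)] [Nonempty (Fin m)]
    (K : Fin n → ℝ) (v : Fin n → Fin m → ℝ) (hK : ∀ i, 0 < K i) (hv : ∀ i j, 0 < v i j)
    (β β' : Fin n → Fin m → ℝ) (hβ : ∀ i j, 0 < β i j)
    (hrec : ∀ i j, β' i j = v i j * (β i j / ∑ i', β i' j)
      * min 1 (K i / ∑ j', v i j' * (β i j' / ∑ i', β i' j'))) :
    (∀ i j, 0 < β' i j) ∧
    (∀ i, ∑ j, β' i j = min (∑ j', v i j' * (β i j' / ∑ i', β i' j')) (K i)) ∧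
    (∀ u : Fin n → Fin m → ℝ, (∀ i j, 0 ≤ u i j) → (∀ i, ∑ j, u i j ≤ K i) →
      Fc K v β' ≤ Fc K v u + KLc u β - KLc u β') := by
  have hq : ∀ j, 0 < ∑ i', β i' j :=
    fun j => Finset.sum_pos (fun i _ => hβ i j) Finset.univ_nonempty
  have hSpos : ∀ i, 0 < ∑ j', v i j' * (β i j' / ∑ i', β i' j') :=
    fun i => Finset.sum_pos
      (fun j _ => mul_pos (hv i j) (div_pos (hβ i j) (hq j))) Finset.univ_nonempty
  have hμpos : ∀ i, 0 < min 1 (K i / ∑ j', v i j' * (β i j' / ∑ i', β i' j')) :=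
    fun i => lt_min one_pos (div_pos (hK i) (hSpos i))
  have hpos : ∀ i j, 0 < β' i j := by
    intro i j
    rw [hrec i j]
    exact mul_pos (mul_pos (hv i j) (div_pos (hβ i j) (hq j))) (hμpos i)
  have hsum : ∀ i, ∑ j, β' i j
      = min (∑ j', v i j' * (β i j' / ∑ i', β i' j')) (K i) := by
    intro i
    have : ∑ j, β' i j = (∑ j, v i j * (β i j / ∑ i', β i' j))
        * min 1 (K i / ∑ j', v i j' * (β i j' / ∑ i', β i' j')) := by
      rw [Finset.sum_mul]
      exact Finset.sum_congr rfl fun j _ => hrec i j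
    rw [this, mul_min_of_nonneg _ _ (hSpos i).le, mul_one,
      mul_div_cancel₀ _ (hSpos i).ne']
  refine ⟨hpos, hsum, ?_⟩
  intro u hu huK
  have expβ' := F_expand K v β' β (fun i j => (hpos i j).le) hβ
  have expu := F_expand K v u β hu hβ
  have hDu : 0 ≤ ∑ j, Dh (∑ i, u i j) (∑ i, β i j) :=
    Finset.sum_nonneg fun j _ =>
      Dh_nonneg (Finset.sum_nonneg fun i _ => hu i j) (hq j)
  -- log-sum inequality: ∑_j Dh(q'_j, q_j) ≤ KLc β' β
  have hKLβ'β : KLc β' β = ∑ j, ((∑ i, β' i j * Real.log (β' i j / β i j))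
      - (∑ i, β' i j) + ∑ i, β i j) := by
    unfold KLc
    rw [Finset.sum_comm (f := fun i j => β' i j * Real.log (β' i j / β i j)),
      Finset.sum_comm (f := fun i j => β' i j), Finset.sum_comm (f := fun i j => β i j),
      ← Finset.sum_sub_distrib, ← Finset.sum_add_distrib]
  have hlogsum : ∑ j, Dh (∑ i, β' i j) (∑ i, β i j) ≤ KLc β' β := by
    rw [hKLβ'β]
    refine Finset.sum_le_sum fun j _ => ?_
    have := logsum (fun i => β' i j) (fun i => β i j) (fun i => hpos i j) (fun i => hβ i j)
    unfold Dh
    linarith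
  have h3pt := threept u β' β hu hpos hβ
  have hlogβ' : ∀ i j, Real.log (β' i j) - Real.log (β i j)
      = (Real.log (v i j) - Real.log (∑ i', β i' j))
        + Real.log (min 1 (K i / ∑ j', v i j' * (β i j' / ∑ i', β i' j'))) := by
    intro i j
    rw [hrec i j, Real.log_mul (mul_pos (hv i j) (div_pos (hβ i j) (hq j))).ne' (hμpos i).ne',
      Real.log_mul (hv i j).ne' (div_pos (hβ i j) (hq j)).ne',
      Real.log_div (hβ i j).ne' (hq j).ne']
    ring
  have hterm : ∀ i j, (u i j - β' i j) * (Real.log (β' i j) - Real.log (β i j))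
      = (β' i j - u i j) * (Real.log (∑ i', β i' j) - Real.log (v i j))
        + (u i j - β' i j)
          * Real.log (min 1 (K i / ∑ j', v i j' * (β i j' / ∑ i', β i' j'))) := by
    intro i j
    rw [hlogβ' i j]
    ring
  simp only [hterm] at h3pt
  have hsplit3 : ∑ i, ∑ j, ((β' i j - u i j) * (Real.log (∑ i', β i' j) - Real.log (v i j))
        + (u i j - β' i j)
          * Real.log (min 1 (K i / ∑ j', v i j' * (β i j' / ∑ i', β i' j'))))
      = (∑ i, ∑ j, (β' i j - u i j) * (Real.log (∑ i', β i' j) - Real.log (v i j)))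
        + ∑ i, ∑ j, (u i j - β' i j)
          * Real.log (min 1 (K i / ∑ j', v i j' * (β i j' / ∑ i', β i' j'))) := by
    simp [Finset.sum_add_distrib]
  rw [hsplit3] at h3pt
  -- positivity of the complementary-slackness term
  have h6 : 0 ≤ ∑ i, ∑ j, (u i j - β' i j)
      * Real.log (min 1 (K i / ∑ j', v i j' * (β i j' / ∑ i', β i' j'))) := by
    refine Finset.sum_nonneg fun i _ => ?_
    rw [← Finset.sum_mul, Finset.sum_sub_distrib, hsum i]
    rcases le_or_gt 1 (K i / ∑ j', v i j' * (β i j' / ∑ i', β i' j')) with h | h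
    · rw [min_eq_left h, Real.log_one, mul_zero]
    · have hKS : K i < ∑ j', v i j' * (β i j' / ∑ i', β i' j') :=
        (div_lt_one (hSpos i)).mp h
      rw [min_eq_right h.le, min_eq_right hKS.le]
      have hlogμ : Real.log (K i / ∑ j', v i j' * (β i j' / ∑ i', β i' j')) ≤ 0 :=
        Real.log_nonpos (div_nonneg (hK i).le (hSpos i).le) h.le
      have hU : ∑ j, u i j - K i ≤ 0 := by linarith [huK i]
      nlinarith
  -- relate the two linear terms
  have hlin : ∀ i j, (β' i j - β i j) * (Real.log (∑ i', β i' j) - Real.log (v i j))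
      = (u i j - β i j) * (Real.log (∑ i', β i' j) - Real.log (v i j))
        + (β' i j - u i j) * (Real.log (∑ i', β i' j) - Real.log (v i j)) := by
    intro i j; ring
  have hlinsum : ∑ i, ∑ j, (β' i j - β i j) * (Real.log (∑ i', β i' j) - Real.log (v i j))
      = (∑ i, ∑ j, (u i j - β i j) * (Real.log (∑ i', β i' j) - Real.log (v i j)))
        + ∑ i, ∑ j, (β' i j - u i j) * (Real.log (∑ i', β i' j) - Real.log (v i j)) := by
    simp only [hlin]
    simp [Finset.sum_add_distrib]
  linarith [expβ', expu, hlogsum, h3pt, h6, hDu, hlinsum]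

lemma tendsto_infDist_minset {X : Type*} [MetricSpace X] {C : Set X} (hC : IsCompact C)
    {F : X → ℝ} (hF : Continuous F) {x : ℕ → X} (hx : ∀ t, x t ∈ C)
    {bstar : X} (hbC : bstar ∈ C) (hbmin : ∀ w ∈ C, F bstar ≤ F w)
    (hconv : Filter.Tendsto (fun t => F (x t)) Filter.atTop (nhds (F bstar))) :
    Filter.Tendsto (fun t => Metric.infDist (x t) {w | w ∈ C ∧ ∀ w' ∈ C, F w ≤ F w'})
      Filter.atTop (nhds 0) := by
  set M := {w | w ∈ C ∧ ∀ w' ∈ C, F w ≤ F w'} with hM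
  have hbM : bstar ∈ M := ⟨hbC, hbmin⟩
  rw [Metric.tendsto_atTop]
  intro ε hε
  have habs : ∀ t, dist (Metric.infDist (x t) M) 0 < ε ↔ Metric.infDist (x t) M < ε := by
    intro t
    rw [Real.dist_eq, sub_zero, abs_of_nonneg Metric.infDist_nonneg]
  by_cases hD : (C ∩ {w | ε ≤ Metric.infDist w M}).Nonempty
  · have hDclosed : IsClosed {w | ε ≤ Metric.infDist w M} :=
      isClosed_le continuous_const (Metric.continuous_infDist_pt M)
    have hDcomp : IsCompact (C ∩ {w | ε ≤ Metric.infDist w M}) := hC.inter_right hDclosed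
    obtain ⟨w0, hw0D, hw0min⟩ := hDcomp.exists_isMinOn hD hF.continuousOn
    have h1 : F bstar < F w0 := by
      rcases lt_or_eq_of_le (hbmin w0 hw0D.1) with h | h
      · exact h
      · exfalso
        have hw0M : w0 ∈ M := ⟨hw0D.1, fun w' hw' => h ▸ hbmin w' hw'⟩
        have := hw0D.2
        rw [Set.mem_setOf_eq, Metric.infDist_zero_of_mem hw0M] at this
        linarith
    obtain ⟨N, hN⟩ := Filter.eventually_atTop.mp (hconv.eventually_lt_const h1)
    refine ⟨N, fun t ht => ?_⟩
    rw [habs]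
    by_contra hge
    push_neg at hge
    exact absurd (hw0min (⟨hx t, hge⟩ : x t ∈ C ∩ _)) (not_le.mpr (hN t ht))
  · refine ⟨0, fun t _ => ?_⟩
    rw [habs]
    by_contra hge
    push_neg at hge
    exact hD ⟨x t, hx t, hge⟩


/-- Convergence of the PR-QLIN proportional-response dynamics in a quasi-linear
Fisher market: from any positive feasible start, the objective gap after `t`
steps is at most `KL(b*‖b⁰)/t`; in particular the objective values converge to
the minimum, and the iterates converge to the set of market-equilibrium
spendings (the minimizers of `F` over `C`). -/
theorem pr_qlin_converges
    (n m : ℕ) (K : Fin n → ℝ) (v : Fin n → Fin m → ℝ)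
    (hK : ∀ i, 0 < K i) (hv : ∀ i j, 0 < v i j)
    (p : (Fin n → Fin m → ℝ) → Fin m → ℝ)
    (hp : ∀ b j, p b j = ∑ i, b i j)
    (C : Set (Fin n → Fin m → ℝ))
    (hC : C = {b | (∀ i j, 0 ≤ b i j) ∧ ∀ i, ∑ j, b i j ≤ K i})
    (F : (Fin n → Fin m → ℝ) → ℝ)
    (hF : ∀ b, F b = -(∑ i, ∑ j, b i j * Real.log (v i j)) +
      (∑ i, (K i - ∑ j, b i j)) + ∑ j, p b j * Real.log (p b j))
    (KL : (Fin n → Fin m → ℝ) → (Fin n → Fin m → ℝ) → ℝ)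
    (hKL : ∀ u w, KL u w = (∑ i, ∑ j, u i j * Real.log (u i j / w i j)) -
      (∑ i, ∑ j, u i j) + ∑ i, ∑ j, w i j)
    (b : ℕ → Fin n → Fin m → ℝ)
    (hb0pos : ∀ i j, 0 < b 0 i j) (hb0C : b 0 ∈ C)
    (S : ℕ → Fin n → ℝ)
    (hS : ∀ t i, S t i = ∑ j, v i j * (b t i j / p (b t) j))
    (hrec : ∀ t i j,
      b (t + 1) i j = v i j * (b t i j / p (b t) j) * min 1 (K i / S t i)) :
    (∀ bstar ∈ C, (∀ w ∈ C, F bstar ≤ F w) →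
      ∀ t : ℕ, 1 ≤ t → F (b t) - F bstar ≤ KL bstar (b 0) / t) ∧
    (∀ bstar ∈ C, (∀ w ∈ C, F bstar ≤ F w) →
      Filter.Tendsto (fun t => F (b t)) Filter.atTop (nhds (F bstar))) ∧
    Filter.Tendsto
      (fun t => Metric.infDist (b t) {w | w ∈ C ∧ ∀ w' ∈ C, F w ≤ F w'})
      Filter.atTop (nhds 0) := by
  -- degenerate case: no firms or no goods
  by_cases hnm : n = 0 ∨ m = 0
  · have hsub : ∀ x y : Fin n → Fin m → ℝ, x = y := by
      rcases hnm with h | h <;> subst h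
      · intro x y; exact funext fun i => i.elim0
      · intro x y; funext i j; exact j.elim0
    have hKL0 : ∀ bstar, KL bstar (b 0) = 0 := by
      intro bstar
      rw [hsub bstar (b 0), hKL]
      have h0 : ∀ i j, b 0 i j * Real.log (b 0 i j / b 0 i j) = 0 := fun i j => by
        rw [div_self (hb0pos i j).ne', Real.log_one, mul_zero]
      simp [h0]
    refine ⟨?_, ?_, ?_⟩
    · intro bstar _ _ t ht
      rw [hsub (b t) bstar, hKL0, sub_self, zero_div]
    · intro bstar _ _
      have : (fun t => F (b t)) = fun _ => F bstar :=
        funext fun t => congrArg F (hsub (b t) bstar)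
      rw [this]
      exact tendsto_const_nhds
    · have hmem : b 0 ∈ {w | w ∈ C ∧ ∀ w' ∈ C, F w ≤ F w'} :=
        ⟨hb0C, fun w' _ => le_of_eq (congrArg F (hsub (b 0) w'))⟩
      have hz : ∀ t, Metric.infDist (b t) {w | w ∈ C ∧ ∀ w' ∈ C, F w ≤ F w'} = 0 :=
        fun t => by rw [hsub (b t) (b 0)]; exact Metric.infDist_zero_of_mem hmem
      simp only [hz]
      exact tendsto_const_nhds
  push_neg at hnm
  haveI : Nonempty (Fin n) := ⟨⟨0, Nat.pos_of_ne_zero hnm.1⟩⟩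
  haveI : Nonempty (Fin m) := ⟨⟨0, Nat.pos_of_ne_zero hnm.2⟩⟩
  -- concrete forms
  have hFc : ∀ a, F a = Fc K v a := by
    intro a; rw [hF]; simp only [hp]; rfl
  have hKLc : ∀ u w, KL u w = KLc u w := fun u w => hKL u w
  have hrec' : ∀ t i j, b (t + 1) i j = v i j * (b t i j / ∑ i', b t i' j)
      * min 1 (K i / ∑ j', v i j' * (b t i j' / ∑ i', b t i' j')) := by
    intro t i j
    rw [hrec t i j, hS t i]
    simp only [hp]
  -- positivity and feasibility of the iterates
  have hiter : ∀ t, (∀ i j, 0 < b t i j) ∧ (∀ i, ∑ j, b t i j ≤ K i) := by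
    intro t
    induction t with
    | zero =>
      refine ⟨hb0pos, ?_⟩
      rw [hC] at hb0C
      exact hb0C.2
    | succ t ih =>
      obtain ⟨hpos, hsum, _⟩ := onestep K v hK hv (b t) (b (t + 1)) ih.1 (hrec' t)
      exact ⟨hpos, fun i => (hsum i).symm ▸ min_le_right _ _⟩
  have hbpos : ∀ t i j, 0 < b t i j := fun t => (hiter t).1
  have hbC : ∀ t, b t ∈ C := by
    intro t; rw [hC]; exact ⟨fun i j => (hbpos t i j).le, (hiter t).2⟩
  have key : ∀ t (u : Fin n → Fin m → ℝ), (∀ i j, 0 ≤ u i j) → (∀ i, ∑ j, u i j ≤ K i) →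
      Fc K v (b (t + 1)) ≤ Fc K v u + KLc u (b t) - KLc u (b (t + 1)) :=
    fun t => (onestep K v hK hv (b t) (b (t + 1)) (hbpos t) (hrec' t)).2.2
  -- part 1
  have part1 : ∀ bstar ∈ C, (∀ w ∈ C, F bstar ≤ F w) →
      ∀ t : ℕ, 1 ≤ t → F (b t) - F bstar ≤ KL bstar (b 0) / t := by
    intro bstar hbstarC hbstarmin t ht
    rw [hC] at hbstarC
    obtain ⟨hm, hmK⟩ := hbstarC
    have hstep : ∀ s, F (b (s + 1)) - F bstar ≤ KLc bstar (b s) - KLc bstar (b (s + 1)) := by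
      intro s
      have := key s bstar hm hmK
      rw [hFc (b (s + 1)), hFc bstar]
      linarith
    have hmono : ∀ s, F (b (s + 1)) ≤ F (b s) := by
      intro s
      have h1 := key s (b s) (fun i j => (hbpos s i j).le) (hiter s).2
      have h2 : KLc (b s) (b s) = 0 := KLc_self (hbpos s)
      have h3 : 0 ≤ KLc (b s) (b (s + 1)) :=
        KLc_nonneg (fun i j => (hbpos s i j).le) (hbpos (s + 1))
      rw [hFc (b (s + 1)), hFc (b s)]
      linarith
    have hanti : Antitone fun s => F (b s) := antitone_nat_of_succ_le hmono
    have htel : ∑ s ∈ Finset.range t, (F (b (s + 1)) - F bstar)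
        ≤ KLc bstar (b 0) - KLc bstar (b t) := by
      calc ∑ s ∈ Finset.range t, (F (b (s + 1)) - F bstar)
          ≤ ∑ s ∈ Finset.range t, (KLc bstar (b s) - KLc bstar (b (s + 1))) :=
            Finset.sum_le_sum fun s _ => hstep s
        _ = KLc bstar (b 0) - KLc bstar (b t) := Finset.sum_range_sub' _ t
    have hlow : ∀ s ∈ Finset.range t, F (b t) - F bstar ≤ F (b (s + 1)) - F bstar := by
      intro s hs
      have : F (b t) ≤ F (b (s + 1)) := hanti (Finset.mem_range.mp hs)
      linarith
    have hcard := Finset.card_nsmul_le_sum (Finset.range t) _ _ hlow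
    rw [Finset.card_range, nsmul_eq_mul] at hcard
    have hKL0 : 0 ≤ KLc bstar (b t) := KLc_nonneg hm (hbpos t)
    have htpos : (0 : ℝ) < t := by exact_mod_cast ht
    rw [hKLc, le_div_iff₀ htpos]
    nlinarith [hcard, htel, hKL0]
  -- part 2
  have part2 : ∀ bstar ∈ C, (∀ w ∈ C, F bstar ≤ F w) →
      Filter.Tendsto (fun t => F (b t)) Filter.atTop (nhds (F bstar)) := by
    intro bstar hbstarC hbstarmin
    have hup : ∀ᶠ t : ℕ in Filter.atTop, F (b t) ≤ F bstar + KL bstar (b 0) / t := by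
      filter_upwards [Filter.eventually_ge_atTop 1] with t ht
      have := part1 bstar hbstarC hbstarmin t ht
      linarith
    have hdn : ∀ᶠ t : ℕ in Filter.atTop, F bstar ≤ F (b t) :=
      Filter.Eventually.of_forall fun t => hbstarmin (b t) (hbC t)
    have hlim : Filter.Tendsto (fun t : ℕ => F bstar + KL bstar (b 0) / t)
        Filter.atTop (nhds (F bstar)) := by
      have := (tendsto_const_div_atTop_nhds_zero_nat (KL bstar (b 0))).const_add (F bstar)
      simpa using this
    exact tendsto_of_tendsto_of_tendsto_of_le_of_le' tendsto_const_nhds hlim hdn hup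
  refine ⟨part1, part2, ?_⟩
  -- part 3
  have hCclosed : IsClosed C := by
    have : C = (⋂ i, ⋂ j, {w : Fin n → Fin m → ℝ | 0 ≤ w i j}) ∩
        ⋂ i, {w : Fin n → Fin m → ℝ | ∑ j, w i j ≤ K i} := by
      rw [hC]; ext w; simp [Set.mem_iInter]
    rw [this]
    refine IsClosed.inter ?_ ?_
    · exact isClosed_iInter fun i => isClosed_iInter fun j =>
        isClosed_le continuous_const ((continuous_apply j).comp (continuous_apply i))
    · exact isClosed_iInter fun i => isClosed_le
        (continuous_finset_sum _ fun j _ => (continuous_apply j).comp (continuous_apply i))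
        continuous_const
  have hCcomp : IsCompact C := by
    refine IsCompact.of_isClosed_subset
      (isCompact_univ_pi fun i => isCompact_univ_pi fun _ : Fin m =>
        isCompact_Icc (a := (0 : ℝ)) (b := K i)) hCclosed ?_
    rw [hC]
    intro w hw
    refine Set.mem_univ_pi.mpr fun i => Set.mem_univ_pi.mpr fun j => ⟨hw.1 i j, ?_⟩
    calc w i j ≤ ∑ j', w i j' :=
        Finset.single_le_sum (fun j' _ => hw.1 i j') (Finset.mem_univ j)
      _ ≤ K i := hw.2 i
  have hFcont : Continuous F := by
    have hFeq : F = fun a => -(∑ i, ∑ j, a i j * Real.log (v i j)) +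
        (∑ i, (K i - ∑ j, a i j)) + ∑ j, (∑ i, a i j) * Real.log (∑ i, a i j) := by
      funext a; rw [hF a]; simp only [hp]
    rw [hFeq]
    refine Continuous.add (Continuous.add ?_ ?_) ?_
    · exact (continuous_finset_sum _ fun i _ => continuous_finset_sum _ fun j _ =>
        (show Continuous fun a : Fin n → Fin m → ℝ => a i j from
          (continuous_apply j).comp (continuous_apply i)).mul continuous_const).neg
    · exact continuous_finset_sum _ fun i _ => continuous_const.sub
        (continuous_finset_sum _ fun j _ => (continuous_apply j).comp (continuous_apply i))
    · exact continuous_finset_sum _ fun j _ => Real.continuous_mul_log.comp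
        (continuous_finset_sum _ fun i _ => (continuous_apply j).comp (continuous_apply i))
  obtain ⟨bstar, hbstarC, hbstarmin⟩ :=
    hCcomp.exists_isMinOn ⟨b 0, hb0C⟩ hFcont.continuousOn
  have hbstarmin' : ∀ w ∈ C, F bstar ≤ F w := fun w hw => hbstarmin hw
  exact tendsto_infDist_minset hCcomp hFcont hbC hbstarC hbstarmin'
    (part2 bstar hbstarC hbstarmin')
end

section
/- Let C ⊆ ℝ^d be a compact convex set, let h be a convex function on C that is differentiable on the relative interior of C, and let d_h(z′, z) = h(z′) − h(z) − ⟨∇h(z), z′ − z⟩ be the associated Bregman divergence. Let F be differentiable and L-Bregman convex with respect to d_h on C, i.e. for all z′ ∈ C and z in the relative interior of C, F(z) + ⟨∇F(z), z′ − z⟩ ≤ F(z′) ≤ F(z) + ⟨∇F(z), z′ − z⟩ + L·d_h(z′, z). Let z⁰ lie in the relative interior of C and let the Mirror Descent iterates satisfy z^{t+1} ∈ argmin_{z ∈ C} { ⟨∇F(z^t), z − z^t⟩ + L·d_h(z, z^t) }, with each z^t in the relative interior of C. Then for every minimizer z* of F over C and every integer t ≥ 1, F(z^t) − F(z*) ≤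 L·d_h(z*, z⁰)/t. -/
open Filter Set
open scoped Topology RealInnerProductSpace

section Helpers

variable {E : Type*} [NormedAddCommGroup E] [InnerProductSpace ℝ E] [CompleteSpace E]

private lemma slope_le_aux {f : ℝ → ℝ} {k c : ℝ} (hf : HasDerivAt f k 0)
    (hb : ∀ s : ℝ, 0 < s → s ≤ 1 → f s - f 0 ≤ s * c) : k ≤ c := by
  have ht : Tendsto (slope f 0) (𝓝[>] 0) (𝓝 k) :=
    (hasDerivAt_iff_tendsto_slope.mp hf).mono_left
      (nhdsWithin_mono _ (fun x hx => ne_of_gt hx))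
  refine le_of_tendsto ht ?_
  filter_upwards [Ioc_mem_nhdsGT_of_mem (Set.mem_Ico.mpr ⟨le_refl _, zero_lt_one⟩)]
    with s hs
  rcases hs with ⟨hs0, hs1⟩
  rw [slope_def_field, sub_zero, div_le_iff₀ hs0, mul_comm]
  exact hb s hs0 hs1

private lemma slope_ge_aux {f : ℝ → ℝ} {k c : ℝ} (hf : HasDerivAt f k 0)
    (hb : ∀ s : ℝ, 0 < s → s ≤ 1 → s * c ≤ f s - f 0) : c ≤ k := by
  have := slope_le_aux hf.neg (c := -c) (fun s hs0 hs1 => by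
    have := hb s hs0 hs1
    show -f s - -f 0 ≤ s * -c
    nlinarith)
  linarith

private lemma grad_chain {φ : E → ℝ} {g x : E} (hd : HasGradientAt φ g x) (v : E) :
    HasDerivAt (fun s : ℝ => φ (x + s • v)) ⟪g, v⟫ 0 := by
  have hγ : HasDerivAt (fun s : ℝ => x + s • v) v 0 := by
    simpa using ((hasDerivAt_id (0:ℝ)).smul_const v).const_add x
  have hd' : HasFDerivAt φ ((InnerProductSpace.toDual ℝ E) g) (x + (0:ℝ) • v) := by
    simpa using hd.hasFDerivAt
  have := hd'.comp_hasDerivAt 0 hγ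
  rw [InnerProductSpace.toDual_apply_apply] at this
  exact this

/-- Gradient inequality for a convex function at a point where it is differentiable. -/
private lemma convex_grad_le {C : Set E} {φ : E → ℝ} (hc : ConvexOn ℝ C φ) {x w g : E}
    (hx : x ∈ C) (hw : w ∈ C) (hd : HasGradientAt φ g x) :
    ⟪g, w - x⟫ ≤ φ w - φ x := by
  refine slope_le_aux (grad_chain hd (w - x)) (fun s hs0 hs1 => ?_)
  have hmem : x + s • (w - x) = (1 - s) • x + s • w := by
    rw [smul_sub, sub_smul, one_smul]; abel
  have := hc.2 hx hw (by linarith : (0:ℝ) ≤ 1 - s) hs0.le (by ring)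
  rw [hmem]
  simp only [smul_eq_mul, zero_smul, add_zero] at *
  nlinarith

/-- First-order optimality: if `u` minimizes `φ` along segments towards `w`,
then the directional derivative is nonnegative. -/
private lemma min_dir_nonneg {φ : E → ℝ} {u w g : E} (hd : HasGradientAt φ g u)
    (hmin : ∀ s : ℝ, 0 < s → s ≤ 1 → φ u ≤ φ (u + s • (w - u))) :
    0 ≤ ⟪g, w - u⟫ := by
  refine slope_ge_aux (grad_chain hd (w - u)) (fun s hs0 hs1 => ?_)
  have := hmin s hs0 hs1
  simp only [zero_smul, add_zero] at *
  nlinarith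

end Helpers

/-- Mirror Descent guarantee: if `F` is `L`-Bregman convex w.r.t. the Bregman
divergence `d_h` on a compact convex set `C`, and the iterates minimize the
linearized objective plus `L·d_h(·, zᵗ)`, then for every minimizer `z*` of `F`
over `C` and every `t ≥ 1`, `F(zᵗ) − F(z*) ≤ L·d_h(z*, z⁰)/t`. -/
theorem mirror_descent_rate
    (d : ℕ) (C : Set (EuclideanSpace ℝ (Fin d)))
    (hCcompact : IsCompact C) (hCconvex : Convex ℝ C)
    (h F : EuclideanSpace ℝ (Fin d) → ℝ)
    (hgrad Fgrad : EuclideanSpace ℝ (Fin d) → EuclideanSpace ℝ (Fin d))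
    (hconv : ConvexOn ℝ C h)
    (hdiff : ∀ z ∈ intrinsicInterior ℝ C, HasGradientAt h (hgrad z) z)
    (Fdiff : ∀ z ∈ intrinsicInterior ℝ C, HasGradientAt F (Fgrad z) z)
    (dh : EuclideanSpace ℝ (Fin d) → EuclideanSpace ℝ (Fin d) → ℝ)
    (hdh : ∀ z' z, dh z' z =
      h z' - h z - (inner ℝ (hgrad z) (z' - z) : ℝ))
    (L : ℝ) (hL : 0 < L)
    (hBregman : ∀ z' ∈ C, ∀ z ∈ intrinsicInterior ℝ C,
      F z + (inner ℝ (Fgrad z) (z' - z) : ℝ) ≤ F z' ∧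
      F z' ≤ F z + (inner ℝ (Fgrad z) (z' - z) : ℝ) + L * dh z' z)
    (z : ℕ → EuclideanSpace ℝ (Fin d))
    (hzint : ∀ t, z t ∈ intrinsicInterior ℝ C)
    (hstep : ∀ t, ∀ w ∈ C,
      (inner ℝ (Fgrad (z t)) (z (t + 1) - z t) : ℝ) + L * dh (z (t + 1)) (z t) ≤
      (inner ℝ (Fgrad (z t)) (w - z t) : ℝ) + L * dh w (z t)) :
    ∀ zstar ∈ C, (∀ w ∈ C, F zstar ≤ F w) →
      ∀ t : ℕ, 1 ≤ t → F (z t) - F zstar ≤ L * dh zstar (z 0) / t := by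
  intro zstar hzstarC hzstarmin t ht
  have hzC : ∀ s, z s ∈ C := fun s =>
    intrinsicInterior_subset (hzint s)
  -- dh of a point with itself is 0
  have hdh_self : ∀ s, dh (z s) (z s) = 0 := fun s => by
    simp [hdh]
  -- dh zstar (z s) is nonnegative
  have hDnonneg : ∀ s, 0 ≤ dh zstar (z s) := fun s => by
    have := convex_grad_le hconv (hzC s) hzstarC (hdiff _ (hzint s))
    rw [hdh]; linarith
  -- monotonicity : F (z (s+1)) ≤ F (z s)
  have hmono : ∀ s, F (z (s + 1)) ≤ F (z s) := by
    intro s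
    have h1 := (hBregman (z (s+1)) (hzC (s+1)) (z s) (hzint s)).2
    have h2 := hstep s (z s) (hzC s)
    simp only [sub_self, inner_zero_right, hdh_self, mul_zero, add_zero, zero_add] at h2
    linarith
  -- the key per-step inequality, via first-order optimality of the mirror step
  have key : ∀ s, F (z (s + 1)) - F zstar ≤
      L * dh zstar (z s) - L * dh zstar (z (s + 1)) := by
    intro s
    set u := z (s + 1) with hu
    set zs := z s with hzs
    set g := Fgrad zs with hg
    -- the mirror-step objective
    set φ : EuclideanSpace ℝ (Fin d) → ℝ :=
      fun w => (inner ℝ g (w - zs) : ℝ) + L * (h w - h zs - (inner ℝ (hgrad zs) (w - zs) : ℝ))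
      with hφ
    have hφstep : ∀ w ∈ C, φ u ≤ φ w := by
      intro w hw
      have := hstep s w hw
      simpa [hφ, hdh] using this
    -- derivative of φ along the segment from u to zstar
    set v := zstar - u with hv
    have harg : ∀ σ : ℝ, u + σ • v - zs = (u - zs) + σ • v := fun σ =>
      add_sub_right_comm u (σ • v) zs
    have hψeq : (fun σ : ℝ => φ (u + σ • v)) =
        fun σ : ℝ => ((inner ℝ g (u - zs) : ℝ) + σ * (inner ℝ g v : ℝ)) +
          L * ((h (u + σ • v) - h zs) -
            ((inner ℝ (hgrad zs) (u - zs) : ℝ) + σ * (inner ℝ (hgrad zs) v : ℝ))) := by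
      funext σ
      simp only [hφ, harg σ, inner_add_right, real_inner_smul_right]
      try ring
    have hlin : ∀ k : ℝ, HasDerivAt (fun σ : ℝ => σ * k) k 0 := fun k => by
      simpa using (hasDerivAt_id (0:ℝ)).mul_const k
    have hhd : HasDerivAt (fun σ : ℝ => h (u + σ • v)) ⟪hgrad u, v⟫ 0 :=
      grad_chain (hdiff u (hzint (s+1))) v
    have hψ : HasDerivAt (fun σ : ℝ => φ (u + σ • v))
        ((inner ℝ g v : ℝ) + L * ((inner ℝ (hgrad u) v : ℝ) - (inner ℝ (hgrad zs) v : ℝ))) 0 := by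
      rw [hψeq]
      exact (((hlin (inner ℝ g v)).const_add _).add
        ((((hhd.sub_const (h zs)).sub ((hlin (inner ℝ (hgrad zs) v)).const_add _)).const_mul L)))
    -- first-order optimality
    have hopt : 0 ≤ (inner ℝ g v : ℝ) +
        L * ((inner ℝ (hgrad u) v : ℝ) - (inner ℝ (hgrad zs) v : ℝ)) := by
      refine slope_ge_aux hψ (fun σ hσ0 hσ1 => ?_)
      have hmem : u + σ • v = (1 - σ) • u + σ • zstar := by
        rw [hv, smul_sub, sub_smul, one_smul]; abel
      have hinC : u + σ • v ∈ C := by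
        rw [hmem]
        exact hCconvex (hzC (s+1)) hzstarC (by linarith) hσ0.le (by ring)
      have := hφstep _ hinC
      simp only [zero_smul, add_zero, mul_zero]
      linarith
    -- the three-point identity
    have h3pt : (inner ℝ (hgrad u) v : ℝ) - (inner ℝ (hgrad zs) v : ℝ) =
        dh zstar zs - dh zstar u - dh u zs := by
      simp only [hdh, hv, inner_sub_right]
      ring
    -- Bregman upper bound at z^{s+1} and lower bound at zstar
    have hub := (hBregman u (hzC (s+1)) zs (hzint s)).2
    have hlb := (hBregman zstar hzstarC zs (hzint s)).1
    -- combine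
    have hsplit : (inner ℝ g (u - zs) : ℝ) =
        (inner ℝ g (zstar - zs) : ℝ) - (inner ℝ g v : ℝ) := by
      simp only [hv, inner_sub_right]; ring
    rw [h3pt] at hopt
    rw [hsplit] at hub
    have hdhuzs : dh u zs = h u - h zs - (inner ℝ (hgrad zs) (u - zs) : ℝ) := hdh u zs
    nlinarith [hopt, hub, hlb]
  -- telescoping by induction
  have claim : ∀ n : ℕ, (n : ℝ) * (F (z n) - F zstar) ≤
      L * dh zstar (z 0) - L * dh zstar (z n) := by
    intro n
    induction n with
    | zero => simp
    | succ m ih =>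
      have hk := key m
      have hm := hmono m
      have hcast : ((m + 1 : ℕ) : ℝ) = (m : ℝ) + 1 := by push_cast; ring
      rw [hcast]
      nlinarith [Nat.cast_nonneg (α := ℝ) m]
  have htpos : (0:ℝ) < (t : ℝ) := by exact_mod_cast ht
  rw [le_div_iff₀ htpos]
  have := claim t
  nlinarith [hDnonneg t]
end

section
/- Consider n firms and m goods with budgets K_i > 0 and valuations v_{ij} > 0, and let F(b) = −∑_{i,j} b_{ij}·ln v_{ij} + ∑_i (K_i − ∑_j b_{ij}) + ∑_j p_j(b)·ln p_j(b) on C, where p_j(b) = ∑_i b_{ij}. Then F is 1-Bregman convex with respect to the KL divergence on C: for every b′ ∈ C and every b ∈ C with all entries strictly positive, 0 ≤ F(b′) − F(b) − ∑_{i,j} (b′_{ij} − b_{ij})·(ln p_j(b) − ln v_{ij}) ≤ KL(b′‖b). -/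
lemma gibbs_nonneg (x y : ℝ) (hx : 0 ≤ x) (hy : 0 < y) :
    0 ≤ x * Real.log x - x * Real.log y - x + y := by
  rcases eq_or_lt_of_le hx with h | hx0
  · simp [← h]; positivity
  · have h1 : Real.log (y / x) ≤ y / x - 1 :=
      Real.log_le_sub_one_of_pos (by positivity)
    have h2 : Real.log (y / x) = Real.log y - Real.log x := Real.log_div hy.ne' hx0.ne'
    nlinarith [mul_le_mul_of_nonneg_left h1 hx0.le,
      mul_div_cancel₀ y hx0.ne']

lemma logsum_term (x y S T : ℝ) (hx : 0 ≤ x) (hy : 0 < y) (hS : 0 < S) (hT : 0 < T) :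
    x * Real.log S - x * Real.log T + x - y * S / T ≤
      x * Real.log x - x * Real.log y := by
  rcases eq_or_lt_of_le hx with h | hx0
  · have : 0 ≤ y * S / T := by positivity
    simp [← h]; linarith
  · have hz : (0:ℝ) < y * S / (x * T) := by positivity
    have h1 : Real.log (y * S / (x * T)) ≤ y * S / (x * T) - 1 :=
      Real.log_le_sub_one_of_pos hz
    have h2 : Real.log (y * S / (x * T)) =
        Real.log y + Real.log S - (Real.log x + Real.log T) := by
      rw [Real.log_div (by positivity) (by positivity), Real.log_mul hy.ne' hS.ne',
        Real.log_mul hx0.ne' hT.ne']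
    have h3 : x * Real.log (y * S / (x * T)) ≤ x * (y * S / (x * T) - 1) :=
      mul_le_mul_of_nonneg_left h1 hx0.le
    have h4 : x * (y * S / (x * T)) = y * S / T := by
      field_simp
    nlinarith

lemma logsum_s9 {ι : Type*} (s : Finset ι) (f g : ι → ℝ)
    (hf : ∀ i ∈ s, 0 ≤ f i) (hg : ∀ i ∈ s, 0 < g i) :
    (∑ i ∈ s, f i) * Real.log (∑ i ∈ s, f i) -
      (∑ i ∈ s, f i) * Real.log (∑ i ∈ s, g i) ≤
    ∑ i ∈ s, (f i * Real.log (f i) - f i * Real.log (g i)) := by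
  set S := ∑ i ∈ s, f i with hSdef
  set T := ∑ i ∈ s, g i with hTdef
  rcases s.eq_empty_or_nonempty with rfl | hne
  · simp [hSdef, hTdef]
  have hT : 0 < T := Finset.sum_pos hg hne
  rcases eq_or_lt_of_le (Finset.sum_nonneg hf : (0:ℝ) ≤ S) with h | hS
  · have hz : ∀ i ∈ s, f i = 0 :=
      (Finset.sum_eq_zero_iff_of_nonneg hf).mp h.symm
    have hS0 : S = 0 := h.symm
    have hr : ∑ i ∈ s, (f i * Real.log (f i) - f i * Real.log (g i)) = 0 :=
      Finset.sum_eq_zero fun i hi => by rw [hz i hi]; ring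
    rw [hr, hS0]; simp
  · have e : ∑ i ∈ s, (f i * Real.log S - f i * Real.log T + f i - g i * S / T)
        = S * Real.log S - S * Real.log T := by
      have hgs : ∑ i ∈ s, g i * S / T = S := by
        rw [← Finset.sum_div, ← Finset.sum_mul, ← hTdef]
        field_simp
      simp only [Finset.sum_sub_distrib, Finset.sum_add_distrib,
        ← Finset.sum_mul, ← hSdef, hgs]
      ring
    calc S * Real.log S - S * Real.log T
        = ∑ i ∈ s, (f i * Real.log S - f i * Real.log T + f i - g i * S / T) := e.symm
      _ ≤ ∑ i ∈ s, (f i * Real.log (f i) - f i * Real.log (g i)) :=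
          Finset.sum_le_sum fun i hi =>
            logsum_term (f i) (g i) S T (hf i hi) (hg i hi) hS hT

/-- The Fisher-market objective `F` is 1-Bregman convex w.r.t. the
KL divergence: for `b' ∈ C` and strictly positive `b ∈ C`,
`0 ≤ F(b') − F(b) − ⟨∇F(b), b' − b⟩ ≤ KL(b'‖b)`. -/
theorem F_one_bregman_convex
    (n m : ℕ) (K : Fin n → ℝ) (v : Fin n → Fin m → ℝ)
    (hK : ∀ i, 0 < K i) (hv : ∀ i j, 0 < v i j)
    (p : (Fin n → Fin m → ℝ) → Fin m → ℝ)
    (hp : ∀ b j, p b j = ∑ i, b i j)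
    (C : Set (Fin n → Fin m → ℝ))
    (hC : C = {b | (∀ i j, 0 ≤ b i j) ∧ ∀ i, ∑ j, b i j ≤ K i})
    (F : (Fin n → Fin m → ℝ) → ℝ)
    (hF : ∀ b, F b = -(∑ i, ∑ j, b i j * Real.log (v i j)) +
      (∑ i, (K i - ∑ j, b i j)) + ∑ j, p b j * Real.log (p b j))
    (KL : (Fin n → Fin m → ℝ) → (Fin n → Fin m → ℝ) → ℝ)
    (hKL : ∀ u w, KL u w = (∑ i, ∑ j, u i j * Real.log (u i j / w i j)) -
      (∑ i, ∑ j, u i j) + ∑ i, ∑ j, w i j)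
    (b' b : Fin n → Fin m → ℝ) (hb' : b' ∈ C) (hb : b ∈ C)
    (hbpos : ∀ i j, 0 < b i j) :
    0 ≤ F b' - F b -
        ∑ i, ∑ j, (b' i j - b i j) * (Real.log (p b j) - Real.log (v i j)) ∧
    F b' - F b -
        (∑ i, ∑ j, (b' i j - b i j) * (Real.log (p b j) - Real.log (v i j)))
      ≤ KL b' b := by
  rw [hC] at hb'
  obtain ⟨hb'nn, -⟩ := hb'
  rcases Nat.eq_zero_or_pos n with hn | hn
  · subst hn
    simp [hF, hKL, hp]
  haveI : Nonempty (Fin n) := Fin.pos_iff_nonempty.mp hn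
  have hP : ∀ j, 0 < ∑ i, b i j :=
    fun j => Finset.sum_pos (fun i _ => hbpos i j) Finset.univ_nonempty
  have hP' : ∀ j, 0 ≤ ∑ i, b' i j :=
    fun j => Finset.sum_nonneg fun i _ => hb'nn i j
  -- rewrite F in column-major form
  have hFc : ∀ c : Fin n → Fin m → ℝ, F c =
      -(∑ j, ∑ i, c i j * Real.log (v i j)) +
        ((∑ i, K i) - ∑ j, ∑ i, c i j) +
        ∑ j, (∑ i, c i j) * Real.log (∑ i, c i j) := by
    intro c
    rw [hF]
    simp only [hp]
    congr 1
    congr 1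
    · rw [Finset.sum_comm]
    · rw [Finset.sum_sub_distrib, Finset.sum_comm]
  -- the gradient term in column-major form
  have h2 : ∑ i, ∑ j, (b' i j - b i j) * (Real.log (p b j) - Real.log (v i j))
      = ∑ j, ((∑ i, b' i j) * Real.log (∑ i, b i j)
          - (∑ i, b i j) * Real.log (∑ i, b i j)
          - ∑ i, b' i j * Real.log (v i j) + ∑ i, b i j * Real.log (v i j)) := by
    rw [Finset.sum_comm]
    refine Finset.sum_congr rfl fun j _ => ?_
    simp only [hp, sub_mul, mul_sub]
    rw [Finset.sum_sub_distrib, Finset.sum_sub_distrib, Finset.sum_sub_distrib,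
      ← Finset.sum_mul, ← Finset.sum_mul]
    ring
  -- key identity: Bregman difference = KL divergence of prices
  have key : F b' - F b -
      ∑ i, ∑ j, (b' i j - b i j) * (Real.log (p b j) - Real.log (v i j))
      = ∑ j, ((∑ i, b' i j) * Real.log (∑ i, b' i j)
          - (∑ i, b' i j) * Real.log (∑ i, b i j)
          - (∑ i, b' i j) + ∑ i, b i j) := by
    rw [hFc, hFc, h2]
    simp only [Finset.sum_sub_distrib, Finset.sum_add_distrib]
    ring
  constructor
  · rw [key]
    exact Finset.sum_nonneg fun j _ =>
      gibbs_nonneg _ _ (hP' j) (hP j)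
  · rw [key, hKL]
    have hKLc : (∑ i, ∑ j, b' i j * Real.log (b' i j / b i j)) -
        (∑ i, ∑ j, b' i j) + ∑ i, ∑ j, b i j
        = ∑ j, ((∑ i, (b' i j * Real.log (b' i j) - b' i j * Real.log (b i j)))
            - (∑ i, b' i j) + ∑ i, b i j) := by
      have e4 : ∀ (i : Fin n) (j : Fin m), b' i j * Real.log (b' i j / b i j)
          = b' i j * Real.log (b' i j) - b' i j * Real.log (b i j) := by
        intro i j
        rcases eq_or_lt_of_le (hb'nn i j) with h | h
        · simp [← h]
        · rw [Real.log_div h.ne' (hbpos i j).ne']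
          ring
      simp only [e4]
      have e1 : (∑ i, ∑ j, (b' i j * Real.log (b' i j) - b' i j * Real.log (b i j)))
          = ∑ j, ∑ i, (b' i j * Real.log (b' i j) - b' i j * Real.log (b i j)) :=
        Finset.sum_comm
      have e2 : (∑ i, ∑ j, b' i j) = ∑ j, ∑ i, b' i j := Finset.sum_comm
      have e3 : (∑ i, ∑ j, b i j) = ∑ j, ∑ i, b i j := Finset.sum_comm
      rw [e1, e2, e3]
      simp only [Finset.sum_sub_distrib, Finset.sum_add_distrib]
    rw [hKLc]
    refine Finset.sum_le_sum fun j _ => ?_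
    have := logsum_s9 Finset.univ (fun i => b' i j) (fun i => b i j)
      (fun i _ => hb'nn i j) (fun i _ => hbpos i j)
    linarith
end

section
/- With F, C, p and KL as in the quasi-linear Fisher market setup, for every b′ ∈ C and every b ∈ C with all entries strictly positive, the Bregman gap of F equals the KL divergence between the induced price vectors: F(b′) − F(b) − ∑_{i,j} (b′_{ij} − b_{ij})·(ln p_j(b) − ln v_{ij}) = KL(p(b′)‖p(b)), where p(b) = (p_1(b), …, p_m(b)). -/
/-- The Bregman gap of the Fisher-market objective `F` equals the KL divergence
between the induced price vectors:
`F(b') − F(b) − ⟨∇F(b), b' − b⟩ = KL(p(b')‖p(b))`. -/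
theorem bregman_gap_eq_price_KL
    (n m : ℕ) (K : Fin n → ℝ) (v : Fin n → Fin m → ℝ)
    (hK : ∀ i, 0 < K i) (hv : ∀ i j, 0 < v i j)
    (p : (Fin n → Fin m → ℝ) → Fin m → ℝ)
    (hp : ∀ b j, p b j = ∑ i, b i j)
    (C : Set (Fin n → Fin m → ℝ))
    (hC : C = {b | (∀ i j, 0 ≤ b i j) ∧ ∀ i, ∑ j, b i j ≤ K i})
    (F : (Fin n → Fin m → ℝ) → ℝ)
    (hF : ∀ b, F b = -(∑ i, ∑ j, b i j * Real.log (v i j)) +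
      (∑ i, (K i - ∑ j, b i j)) + ∑ j, p b j * Real.log (p b j))
    (KLm : (Fin m → ℝ) → (Fin m → ℝ) → ℝ)
    (hKLm : ∀ u w, KLm u w = (∑ j, u j * Real.log (u j / w j)) -
      (∑ j, u j) + ∑ j, w j)
    (b' b : Fin n → Fin m → ℝ) (hb' : b' ∈ C) (hb : b ∈ C)
    (hbpos : ∀ i j, 0 < b i j) :
    F b' - F b -
        (∑ i, ∑ j, (b' i j - b i j) * (Real.log (p b j) - Real.log (v i j)))
      = KLm (p b') (p b) := by
  -- key pointwise log identity
  have key : ∀ j, (∑ i, b' i j) * Real.log ((∑ i, b' i j) / (∑ i, b i j))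
      = (∑ i, b' i j) * Real.log (∑ i, b' i j)
        - (∑ i, b' i j) * Real.log (∑ i, b i j) := by
    intro j
    rcases eq_or_ne (∑ i, b' i j) 0 with h | h
    · simp [h]
    · have hn : (Finset.univ : Finset (Fin n)).Nonempty := by
        by_contra hempty
        rw [Finset.not_nonempty_iff_eq_empty] at hempty
        exact h (by simp [hempty])
      have hpj : 0 < ∑ i, b i j := Finset.sum_pos (fun i _ => hbpos i j) hn
      rw [Real.log_div h hpj.ne', mul_sub]
  simp only [hF, hKLm, hp]
  have hKLrw : ∑ j, (∑ i, b' i j) * Real.log ((∑ i, b' i j) / (∑ i, b i j))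
      = (∑ j, (∑ i, b' i j) * Real.log (∑ i, b' i j))
        - ∑ j, (∑ i, b' i j) * Real.log (∑ i, b i j) := by
    rw [← Finset.sum_sub_distrib]
    exact Finset.sum_congr rfl fun j _ => key j
  rw [hKLrw]
  have f1 : ∑ i, (K i - ∑ j, b' i j) = (∑ i, K i) - ∑ i, ∑ j, b' i j :=
    Finset.sum_sub_distrib _ _
  have f2 : ∑ i, (K i - ∑ j, b i j) = (∑ i, K i) - ∑ i, ∑ j, b i j :=
    Finset.sum_sub_distrib _ _
  have f3 : ∑ i, ∑ j, b' i j = ∑ j, ∑ i, b' i j := Finset.sum_comm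
  have f4 : ∑ i, ∑ j, b i j = ∑ j, ∑ i, b i j := Finset.sum_comm
  have f5 : ∑ i, ∑ j, (b' i j - b i j) * (Real.log (∑ i', b i' j) - Real.log (v i j))
      = (∑ j, (∑ i, b' i j) * Real.log (∑ i, b i j))
        - (∑ j, (∑ i, b i j) * Real.log (∑ i, b i j))
        - (∑ i, ∑ j, b' i j * Real.log (v i j))
        + ∑ i, ∑ j, b i j * Real.log (v i j) := by
    rw [Finset.sum_comm]
    have h1 : ∑ i, ∑ j, b' i j * Real.log (v i j)
        = ∑ j, ∑ i, b' i j * Real.log (v i j) := Finset.sum_comm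
    have h2 : ∑ i, ∑ j, b i j * Real.log (v i j)
        = ∑ j, ∑ i, b i j * Real.log (v i j) := Finset.sum_comm
    rw [h1, h2, ← Finset.sum_sub_distrib, ← Finset.sum_sub_distrib,
      ← Finset.sum_add_distrib]
    refine Finset.sum_congr rfl fun j _ => ?_
    simp only [sub_mul, mul_sub, Finset.sum_sub_distrib, ← Finset.sum_mul]
    ring
  rw [f5]
  linarith [f1, f2, f3, f4]
end

section
/- Consider n firms and m goods with valuations v_{ij} > 0 and budgets K_i > 0, let C = {b : b_{ij} ≥ 0, ∑_j b_{ij} ≤ K_i for all i}, and let b# minimize F(b) = −∑_{i,j} b_{ij}·ln v_{ij} + ∑_i (K_i − ∑_j b_{ij}) + ∑_j p_j(b)·ln p_j(b) over C, where p_j(b) = ∑_i b_{ij}, and suppose p#_j = p_j(b#) > 0 for all j. Then for each firm i: (i) if ∑_j b#_{ij} = K_i, there exists a constant C̃_i ≥ 1 such that v_{ij}/p#_j ≤ C̃_i for all j, with equality whenever b#_{ij} > 0; (ii) if ∑_j b#_{ij} < K_i, then v_{ij}/p#_j ≤ 1 for all j, with equality whenever b#_{ij} > 0. -/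
private lemma shmyrev_tangent_bound {x y : ℝ} (hx : 0 < x) (hy : 0 < y) :
    y * Real.log y - x * Real.log x ≤ (y - x) * (Real.log y + 1) := by
  have h := Real.log_le_sub_one_of_pos (show 0 < y / x from div_pos hy hx)
  rw [Real.log_div (ne_of_gt hy) (ne_of_gt hx)] at h
  have h2 : x * (Real.log y - Real.log x) ≤ x * (y / x - 1) :=
    mul_le_mul_of_nonneg_left h hx.le
  have h3 : x * (y / x - 1) = y - x := by field_simp
  nlinarith [h2, h3]

private lemma shmyrev_perturb
    (n m : ℕ) (v : Fin n → Fin m → ℝ) (K : Fin n → ℝ)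
    (p : (Fin n → Fin m → ℝ) → Fin m → ℝ)
    (hp : ∀ b j, p b j = ∑ i, b i j)
    (F : (Fin n → Fin m → ℝ) → ℝ)
    (hF : ∀ b, F b = -(∑ i, ∑ j, b i j * Real.log (v i j)) +
      (∑ i, (K i - ∑ j, b i j)) + ∑ j, p b j * Real.log (p b j))
    (bs : Fin n → Fin m → ℝ)
    (hbsC : bs ∈ {b : Fin n → Fin m → ℝ | (∀ i j, 0 ≤ b i j) ∧ ∀ i, ∑ j, b i j ≤ K i})
    (hmin : ∀ w ∈ {b : Fin n → Fin m → ℝ | (∀ i j, 0 ≤ b i j) ∧ ∀ i, ∑ j, b i j ≤ K i},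
      F bs ≤ F w)
    (ps : Fin m → ℝ) (hpsdef : ∀ j, ps j = p bs j) (hps_pos : ∀ j, 0 < ps j) :
    ∀ (i : Fin n) (d : Fin m → ℝ), (∀ j, 0 ≤ bs i j + d j) →
      (∑ j, (bs i j + d j)) ≤ K i → (∀ j, 0 < ps j + d j) →
      0 ≤ ∑ j, d j * (Real.log (ps j + d j) - Real.log (v i j)) := by
  obtain ⟨hb0, hbK⟩ := hbsC
  intro i d hd0 hdK hdp
  set b' : Fin n → Fin m → ℝ := Function.update bs i (fun j => bs i j + d j) with hb'
  have hb'C : b' ∈ {b : Fin n → Fin m → ℝ | (∀ i j, 0 ≤ b i j) ∧ ∀ i, ∑ j, b i j ≤ K i} := by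
    constructor
    · intro i' j
      rcases eq_or_ne i' i with rfl | h
      · simp [hb', hd0 j]
      · simp [hb', Function.update_of_ne h, hb0]
    · intro i'
      rcases eq_or_ne i' i with rfl | h
      · simpa [hb'] using hdK
      · simp [hb', Function.update_of_ne h, hbK i']
  have hmin' := hmin b' hb'C
  have hrow : ∀ i', b' i' = if i' = i then (fun j => bs i j + d j) else bs i' := by
    intro i'; rcases eq_or_ne i' i with rfl | h
    · simp [hb']
    · simp [hb', Function.update_of_ne h, h]
  have e1 : ∑ i', ∑ j, b' i' j * Real.log (v i' j)
      = (∑ i', ∑ j, bs i' j * Real.log (v i' j)) + ∑ j, d j * Real.log (v i j) := by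
    have : ∀ i', ∑ j, b' i' j * Real.log (v i' j)
        = (∑ j, bs i' j * Real.log (v i' j)) +
          (if i' = i then ∑ j, d j * Real.log (v i j) else 0) := by
      intro i'; rcases eq_or_ne i' i with rfl | h
      · simp only [hrow, if_pos rfl, if_true]
        rw [← Finset.sum_add_distrib]
        exact Finset.sum_congr rfl (fun j _ => by ring)
      · simp [hrow, h]
    rw [Finset.sum_congr rfl (fun i' _ => this i'), Finset.sum_add_distrib,
      Finset.sum_ite_eq' Finset.univ i]
    simp
  have e2 : ∑ i', (K i' - ∑ j, b' i' j)
      = (∑ i', (K i' - ∑ j, bs i' j)) - ∑ j, d j := by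
    have : ∀ i', (K i' - ∑ j, b' i' j)
        = (K i' - ∑ j, bs i' j) - (if i' = i then ∑ j, d j else 0) := by
      intro i'; rcases eq_or_ne i' i with rfl | h
      · simp only [hrow, if_pos rfl, if_true, Finset.sum_add_distrib]; ring
      · simp [hrow, h]
    rw [Finset.sum_congr rfl (fun i' _ => this i'), Finset.sum_sub_distrib,
      Finset.sum_ite_eq' Finset.univ i]
    simp
  have e3 : ∀ j, p b' j = ps j + d j := by
    intro j
    rw [hp, hpsdef, hp]
    have : ∀ i', b' i' j = bs i' j + (if i' = i then d j else 0) := by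
      intro i'; rcases eq_or_ne i' i with rfl | h
      · simp [hrow]
      · simp [hrow, h]
    rw [Finset.sum_congr rfl (fun i' _ => this i'), Finset.sum_add_distrib,
      Finset.sum_ite_eq' Finset.univ i]
    simp
  have e4 : ∑ j, p b' j * Real.log (p b' j)
      = ∑ j, (ps j + d j) * Real.log (ps j + d j) :=
    Finset.sum_congr rfl (fun j _ => by rw [e3])
  have e5 : ∑ j, p bs j * Real.log (p bs j) = ∑ j, ps j * Real.log (ps j) :=
    Finset.sum_congr rfl (fun j _ => by rw [← hpsdef])
  have hdiff : 0 ≤ -(∑ j, d j * Real.log (v i j)) - (∑ j, d j)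
      + ∑ j, ((ps j + d j) * Real.log (ps j + d j) - ps j * Real.log (ps j)) := by
    have hFb' := hF b'
    have hFbs := hF bs
    rw [e1, e2, e4] at hFb'
    rw [e5] at hFbs
    rw [Finset.sum_sub_distrib]
    linarith [hmin']
  have hbound : ∑ j, ((ps j + d j) * Real.log (ps j + d j) - ps j * Real.log (ps j))
      ≤ ∑ j, d j * (Real.log (ps j + d j) + 1) := by
    apply Finset.sum_le_sum
    intro j _
    have := shmyrev_tangent_bound (hps_pos j) (hdp j)
    simpa using this
  have final : -(∑ j, d j * Real.log (v i j)) - (∑ j, d j)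
      + ∑ j, d j * (Real.log (ps j + d j) + 1)
      = ∑ j, d j * (Real.log (ps j + d j) - Real.log (v i j)) := by
    have h : ∀ j ∈ Finset.univ, d j * (Real.log (ps j + d j) - Real.log (v i j))
        = d j * (Real.log (ps j + d j) + 1) - d j - d j * Real.log (v i j) := by
      intro j _; ring
    rw [Finset.sum_congr rfl h, Finset.sum_sub_distrib, Finset.sum_sub_distrib]
    ring
  linarith [hdiff, hbound]

/-- First-order characterization of the minimizers of the Shmyrev-type convex
program (i.e. of market-equilibrium spendings of the quasi-linear Fisher
market): for each firm `i`, if the budget is exhausted there is a constant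
`C̃ᵢ ≥ 1` bounding `v_{ij}/p#_j`, with equality on supported goods; if the
budget is not exhausted the same holds with constant `1`. -/
theorem shmyrev_first_order_conditions
    (n m : ℕ) (v : Fin n → Fin m → ℝ) (K : Fin n → ℝ)
    (hv : ∀ i j, 0 < v i j) (hK : ∀ i, 0 < K i)
    (p : (Fin n → Fin m → ℝ) → Fin m → ℝ)
    (hp : ∀ b j, p b j = ∑ i, b i j)
    (C : Set (Fin n → Fin m → ℝ))
    (hC : C = {b | (∀ i j, 0 ≤ b i j) ∧ ∀ i, ∑ j, b i j ≤ K i})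
    (F : (Fin n → Fin m → ℝ) → ℝ)
    (hF : ∀ b, F b = -(∑ i, ∑ j, b i j * Real.log (v i j)) +
      (∑ i, (K i - ∑ j, b i j)) + ∑ j, p b j * Real.log (p b j))
    (bs : Fin n → Fin m → ℝ) (hbsC : bs ∈ C)
    (hmin : ∀ w ∈ C, F bs ≤ F w)
    (ps : Fin m → ℝ) (hpsdef : ∀ j, ps j = p bs j) (hps_pos : ∀ j, 0 < ps j) :
    ∀ i,
      ((∑ j, bs i j = K i) → ∃ Ci : ℝ, 1 ≤ Ci ∧
        ∀ j, v i j / ps j ≤ Ci ∧ (0 < bs i j → v i j / ps j = Ci)) ∧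
      ((∑ j, bs i j < K i) →
        ∀ j, v i j / ps j ≤ 1 ∧ (0 < bs i j → v i j / ps j = 1)) := by
  subst hC
  have perturb := shmyrev_perturb n m v K p hp F hF bs hbsC hmin ps hpsdef hps_pos
  obtain ⟨hb0, hbK⟩ := hbsC
  -- bs i j ≤ ps j
  have hble : ∀ (i : Fin n) (j : Fin m), bs i j ≤ ps j := by
    intro i j
    rw [hpsdef, hp]
    exact Finset.single_le_sum (fun i' _ => hb0 i' j) (Finset.mem_univ i)
  -- (A) supported goods satisfy ps j ≤ v i j
  have hA : ∀ (i : Fin n) (j : Fin m), 0 < bs i j → ps j ≤ v i j := by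
    intro i j hbij
    by_contra hlt
    push_neg at hlt  -- v i j < ps j
    set t : ℝ := min (bs i j) ((ps j - v i j) / 2) with ht
    have ht0 : 0 < t := lt_min hbij (by linarith)
    have htb : t ≤ bs i j := min_le_left _ _
    have hth : t ≤ (ps j - v i j) / 2 := min_le_right _ _
    set d : Fin m → ℝ := fun x => if x = j then -t else 0 with hd
    have h1 : ∀ x, 0 ≤ bs i x + d x := by
      intro x; by_cases h : x = j
      · subst h; simp only [hd, if_pos rfl]; linarith
      · simp [hd, h, hb0 i x]
    have h2 : (∑ x, (bs i x + d x)) ≤ K i := by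
      have : ∑ x, d x = -t := by simp [hd]
      rw [Finset.sum_add_distrib, this]
      linarith [hbK i]
    have h3 : ∀ x, 0 < ps x + d x := by
      intro x; by_cases h : x = j
      · subst h; simp only [hd, if_pos rfl]; linarith [hv i x]
      · simp [hd, h, hps_pos x]
    have key := perturb i d h1 h2 h3
    have hsum : ∑ x, d x * (Real.log (ps x + d x) - Real.log (v i x))
        = -t * (Real.log (ps j - t) - Real.log (v i j)) := by
      rw [Finset.sum_eq_single j]
      · have hdj : d j = -t := by simp [hd]
        rw [hdj]; ring_nf
      · intro x _ h; simp [hd, h]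
      · intro h; exact absurd (Finset.mem_univ j) h
    rw [hsum] at key
    -- key : 0 ≤ -t * (log (ps j - t) - log (v i j)), so log(ps j - t) ≤ log(v i j)
    have hlog : Real.log (ps j - t) ≤ Real.log (v i j) := by nlinarith [key, ht0]
    have : Real.log (v i j) < Real.log (ps j - t) :=
      Real.log_lt_log (hv i j) (by linarith)
    linarith
  -- (B) budget slack implies v i j ≤ ps j for all j
  have hB : ∀ (i : Fin n), (∑ j, bs i j < K i) → ∀ j, v i j ≤ ps j := by
    intro i hslack j
    by_contra hlt
    push_neg at hlt  -- ps j < v i j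
    set t : ℝ := min (K i - ∑ x, bs i x) ((v i j - ps j) / 2) with ht
    have ht0 : 0 < t := lt_min (by linarith) (by linarith)
    have htb : t ≤ K i - ∑ x, bs i x := min_le_left _ _
    have hth : t ≤ (v i j - ps j) / 2 := min_le_right _ _
    set d : Fin m → ℝ := fun x => if x = j then t else 0 with hd
    have h1 : ∀ x, 0 ≤ bs i x + d x := by
      intro x; by_cases h : x = j
      · subst h; simp only [hd, if_pos rfl]; linarith [hb0 i x]
      · simp [hd, h, hb0 i x]
    have h2 : (∑ x, (bs i x + d x)) ≤ K i := by
      have : ∑ x, d x = t := by simp [hd]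
      rw [Finset.sum_add_distrib, this]
      linarith
    have h3 : ∀ x, 0 < ps x + d x := by
      intro x; by_cases h : x = j
      · subst h; simp only [hd, if_pos rfl]; linarith [hps_pos x, ht0]
      · simp [hd, h, hps_pos x]
    have key := perturb i d h1 h2 h3
    have hsum : ∑ x, d x * (Real.log (ps x + d x) - Real.log (v i x))
        = t * (Real.log (ps j + t) - Real.log (v i j)) := by
      rw [Finset.sum_eq_single j]
      · have hdj : d j = t := by simp [hd]
        rw [hdj]
      · intro x _ h; simp [hd, h]
      · intro h; exact absurd (Finset.mem_univ j) h
    rw [hsum] at key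
    have hlog : Real.log (v i j) ≤ Real.log (ps j + t) := by nlinarith [key, ht0]
    have : Real.log (ps j + t) < Real.log (v i j) :=
      Real.log_lt_log (by linarith [hps_pos j]) (by linarith)
    linarith
  -- (Cmp) transfer: if bs i j > 0 then v i j' * ps j ≤ v i j * ps j'
  have hCmp : ∀ (i : Fin n) (j j' : Fin m), 0 < bs i j →
      v i j' * ps j ≤ v i j * ps j' := by
    intro i j j' hbij
    rcases eq_or_ne j' j with rfl | hjj'
    · exact le_rfl
    by_contra hlt
    push_neg at hlt  -- v i j * ps j' < v i j' * ps j
    have hP := hps_pos j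
    have hP' := hps_pos j'
    have hva := hv i j
    have hva' := hv i j'
    have hnum : 0 < v i j' * ps j - v i j * ps j' := by linarith
    set δ : ℝ := (v i j' * ps j - v i j * ps j') / (2 * (v i j + v i j')) with hδ
    have hδ0 : 0 < δ := div_pos hnum (by positivity)
    set t : ℝ := min (min (bs i j) (ps j / 2)) δ with htdef
    have ht0 : 0 < t := lt_min (lt_min hbij (by linarith)) hδ0
    have htb : t ≤ bs i j := le_trans (min_le_left _ _) (min_le_left _ _)
    have htp : t ≤ ps j / 2 := le_trans (min_le_left _ _) (min_le_right _ _)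
    have htδ : t ≤ δ := min_le_right _ _
    set d : Fin m → ℝ := fun x => (if x = j' then t else 0) + (if x = j then -t else 0) with hd
    have hdj : d j = -t := by simp [hd, hjj'.symm, Ne.symm hjj']
    have hdj' : d j' = t := by simp [hd, hjj']
    have hdo : ∀ x, x ≠ j → x ≠ j' → d x = 0 := by intro x h h'; simp [hd, h, h']
    have h1 : ∀ x, 0 ≤ bs i x + d x := by
      intro x
      by_cases h : x = j
      · subst h; rw [hdj]; linarith
      by_cases h' : x = j'
      · subst h'; rw [hdj']; linarith [hb0 i x, ht0]
      · rw [hdo x h h']; linarith [hb0 i x]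
    have h2 : (∑ x, (bs i x + d x)) ≤ K i := by
      have hds : ∑ x, d x = 0 := by
        rw [hd]
        rw [Finset.sum_add_distrib]
        simp
      rw [Finset.sum_add_distrib, hds]
      simpa using hbK i
    have h3 : ∀ x, 0 < ps x + d x := by
      intro x
      by_cases h : x = j
      · subst h; rw [hdj]; linarith [htp, hps_pos x]
      by_cases h' : x = j'
      · subst h'; rw [hdj']; linarith [hps_pos x, ht0]
      · rw [hdo x h h']; linarith [hps_pos x]
    have key := perturb i d h1 h2 h3
    have hsum : ∑ x, d x * (Real.log (ps x + d x) - Real.log (v i x))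
        = t * (Real.log (ps j' + t) - Real.log (v i j'))
          + (-t) * (Real.log (ps j - t) - Real.log (v i j)) := by
      have hterm : ∀ x ∈ Finset.univ, d x * (Real.log (ps x + d x) - Real.log (v i x))
          = (if x = j' then t * (Real.log (ps x + d x) - Real.log (v i x)) else 0)
            + (if x = j then (-t) * (Real.log (ps x + d x) - Real.log (v i x)) else 0) := by
        intro x _
        rcases eq_or_ne x j with rfl | h
        · rw [if_neg hjj'.symm, if_pos rfl, hdj]; ring
        rcases eq_or_ne x j' with rfl | h'
        · rw [if_pos rfl, if_neg h, hdj']; ring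
        · rw [if_neg h', if_neg h, hdo x h h']; ring
      rw [Finset.sum_congr rfl hterm, Finset.sum_add_distrib,
        Finset.sum_ite_eq' Finset.univ j', Finset.sum_ite_eq' Finset.univ j,
        if_pos (Finset.mem_univ j'), if_pos (Finset.mem_univ j), hdj, hdj']
      ring_nf
    rw [hsum] at key
    -- from key : log (ps j - t) - log (v i j) ≤ log (ps j' + t) - log (v i j')
    have hkey2 : Real.log (ps j - t) - Real.log (v i j)
        ≤ Real.log (ps j' + t) - Real.log (v i j') := by nlinarith [key, ht0]
    -- but t ≤ δ gives v i j * (ps j' + t) < v i j' * (ps j - t)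
    have hprod : v i j * (ps j' + t) < v i j' * (ps j - t) := by
      have : t * (v i j + v i j') ≤ (v i j' * ps j - v i j * ps j') / 2 := by
        calc t * (v i j + v i j') ≤ δ * (v i j + v i j') := by nlinarith
        _ = (v i j' * ps j - v i j * ps j') / 2 := by
            rw [hδ]; field_simp
      nlinarith
    have hlt2 : Real.log (v i j * (ps j' + t)) < Real.log (v i j' * (ps j - t)) :=
      Real.log_lt_log (by positivity) hprod
    rw [Real.log_mul (ne_of_gt hva) (by positivity),
      Real.log_mul (ne_of_gt hva') (by nlinarith)] at hlt2
    linarith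
  -- assemble
  intro i
  constructor
  · intro hsat
    -- some good is supported
    have hex : ∃ j0, 0 < bs i j0 := by
      by_contra hno
      push_neg at hno
      have : ∑ j, bs i j = 0 :=
        Finset.sum_eq_zero (fun j _ => le_antisymm (hno j) (hb0 i j))
      rw [this] at hsat
      exact absurd hsat.symm (ne_of_gt (hK i))
    obtain ⟨j0, hj0⟩ := hex
    refine ⟨v i j0 / ps j0, ?_, ?_⟩
    · rw [le_div_iff₀ (hps_pos j0)]
      simpa using hA i j0 hj0
    · intro j
      constructor
      · rw [div_le_div_iff₀ (hps_pos j) (hps_pos j0)]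
        exact hCmp i j0 j hj0
      · intro hj
        have h1 := hCmp i j0 j hj0
        have h2 := hCmp i j j0 hj
        rw [div_eq_div_iff (ne_of_gt (hps_pos j)) (ne_of_gt (hps_pos j0))]
        linarith
  · intro hslack j
    constructor
    · rw [div_le_one (hps_pos j)]
      exact hB i hslack j
    · intro hj
      have h1 := hA i j hj
      have h2 := hB i hslack j
      rw [div_eq_one_iff_eq (ne_of_gt (hps_pos j))]
      linarith
end

section
/- Fix r > 0 and let J(r) be the real 2×2 matrix with rows (0, (1−r)/(2r)) and ((r−1)/2, 0). Then the characteristic polynomial of J(r) is λ² + (r−1)²/(4r); over ℂ its eigenvalues are ±i·(r−1)/(2√r), each of modulus |r−1|/(2√r); and, with r₀ = 3 + 2√2, this modulus is strictly less than 1 if and only if r₀⁻¹ < r < r₀, equal to 1 if and only if r = r₀ or r = r₀⁻¹, and strictly greater than 1 if and only if 0 < r < r₀⁻¹ or r > r₀. In particular, |r−1|/(2√r) = 1 if and only if r² − 6r + 1 = 0. -/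
lemma tullock_quad_lt (r : ℝ) :
    r ^ 2 - 6 * r + 1 < 0 ↔ 3 - 2 * Real.sqrt 2 < r ∧ r < 3 + 2 * Real.sqrt 2 := by
  have ht0 : (0:ℝ) < Real.sqrt 2 := Real.sqrt_pos.mpr (by norm_num)
  have ht2 : Real.sqrt 2 ^ 2 = 2 := Real.sq_sqrt (by norm_num)
  constructor
  · intro h
    constructor
    · by_contra h'
      push_neg at h'
      nlinarith
    · by_contra h'
      push_neg at h'
      nlinarith
  · rintro ⟨h1, h2⟩
    nlinarith [mul_pos (by linarith : (0:ℝ) < r - (3 - 2 * Real.sqrt 2))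
      (by linarith : (0:ℝ) < 3 + 2 * Real.sqrt 2 - r)]

lemma tullock_quad_eq (r : ℝ) :
    r ^ 2 - 6 * r + 1 = 0 ↔ r = 3 + 2 * Real.sqrt 2 ∨ r = 3 - 2 * Real.sqrt 2 := by
  have ht2 : Real.sqrt 2 ^ 2 = 2 := Real.sq_sqrt (by norm_num)
  constructor
  · intro h
    have hfac2 : (r - (3 + 2 * Real.sqrt 2)) * (r - (3 - 2 * Real.sqrt 2)) = 0 := by
      linear_combination h - 4 * ht2
    rcases mul_eq_zero.mp hfac2 with h' | h'
    · exact Or.inl (sub_eq_zero.mp h')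
    · exact Or.inr (sub_eq_zero.mp h')
  · rintro (h | h) <;> subst h <;> linear_combination 4 * ht2

lemma tullock_quad_gt (r : ℝ) :
    0 < r ^ 2 - 6 * r + 1 ↔ r < 3 - 2 * Real.sqrt 2 ∨ 3 + 2 * Real.sqrt 2 < r := by
  have ht0 : (0:ℝ) < Real.sqrt 2 := Real.sqrt_pos.mpr (by norm_num)
  have ht2 : Real.sqrt 2 ^ 2 = 2 := Real.sq_sqrt (by norm_num)
  constructor
  · intro h
    by_contra hcon
    push_neg at hcon
    obtain ⟨hl, hr'⟩ := hcon
    nlinarith [mul_nonneg (by linarith : (0:ℝ) ≤ r - (3 - 2 * Real.sqrt 2))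
      (by linarith : (0:ℝ) ≤ 3 + 2 * Real.sqrt 2 - r)]
  · rintro (h | h) <;> nlinarith

lemma tullock_abs_lt (r s : ℝ) (hr : 0 < r) (hs0 : 0 < s) (hs2 : s ^ 2 = r) :
    |r - 1| < 2 * s ↔ r ^ 2 - 6 * r + 1 < 0 := by
  have h2s : (0:ℝ) < 2 * s := by positivity
  constructor
  · intro h
    have h2 := mul_self_lt_mul_self (abs_nonneg (r - 1)) h
    nlinarith [sq_abs (r - 1)]
  · intro h
    have h4 : (r - 1) ^ 2 < (2 * s) ^ 2 := by nlinarith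
    calc |r - 1| = Real.sqrt ((r - 1) ^ 2) := (Real.sqrt_sq_eq_abs _).symm
      _ < Real.sqrt ((2 * s) ^ 2) := Real.sqrt_lt_sqrt (sq_nonneg _) h4
      _ = 2 * s := Real.sqrt_sq h2s.le

lemma tullock_abs_eq (r s : ℝ) (hr : 0 < r) (hs0 : 0 < s) (hs2 : s ^ 2 = r) :
    |r - 1| = 2 * s ↔ r ^ 2 - 6 * r + 1 = 0 := by
  have h2s : (0:ℝ) < 2 * s := by positivity
  constructor
  · intro h
    have h2 : |r - 1| ^ 2 = (2 * s) ^ 2 := by rw [h]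
    rw [sq_abs] at h2
    nlinarith
  · intro h
    have h4 : (r - 1) ^ 2 = (2 * s) ^ 2 := by nlinarith
    rw [← Real.sqrt_sq_eq_abs, h4, Real.sqrt_sq h2s.le]

lemma tullock_abs_gt (r s : ℝ) (hr : 0 < r) (hs0 : 0 < s) (hs2 : s ^ 2 = r) :
    2 * s < |r - 1| ↔ 0 < r ^ 2 - 6 * r + 1 := by
  have h2s : (0:ℝ) < 2 * s := by positivity
  constructor
  · intro h
    have h2 := mul_self_lt_mul_self h2s.le h
    nlinarith [sq_abs (r - 1)]
  · intro h
    have h4 : (2 * s) ^ 2 < (r - 1) ^ 2 := by nlinarith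
    calc 2 * s = Real.sqrt ((2 * s) ^ 2) := (Real.sqrt_sq h2s.le).symm
      _ < Real.sqrt ((r - 1) ^ 2) := Real.sqrt_lt_sqrt (sq_nonneg _) h4
      _ = |r - 1| := Real.sqrt_sq_eq_abs _

set_option maxHeartbeats 1000000 in
/-- For `J(r) = !![0, (1−r)/(2r); (r−1)/2, 0]`: its characteristic polynomial
is `λ² + (r−1)²/(4r)`; over `ℂ` its spectrum is `{±i(r−1)/(2√r)}`, each
eigenvalue having modulus `|r−1|/(2√r)`; this modulus is `< 1` iff
`r₀⁻¹ < r < r₀`, `= 1` iff `r = r₀` or `r = r₀⁻¹`, and `> 1` iff `r < r₀⁻¹`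
or `r > r₀`, where `r₀ = 3 + 2√2`; in particular it equals `1` iff
`r² − 6r + 1 = 0`. -/
theorem tullock_jacobian_spectrum
    (r : ℝ) (hr : 0 < r)
    (J : Matrix (Fin 2) (Fin 2) ℝ)
    (hJ : J = !![0, (1 - r) / (2 * r); (r - 1) / 2, 0])
    (r₀ : ℝ) (hr₀ : r₀ = 3 + 2 * Real.sqrt 2) :
    J.charpoly = Polynomial.X ^ 2 + Polynomial.C ((r - 1) ^ 2 / (4 * r)) ∧
    spectrum ℂ (J.map (algebraMap ℝ ℂ)) =
      {Complex.I * ((r : ℂ) - 1) / (2 * (Real.sqrt r : ℂ)),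
       -(Complex.I * ((r : ℂ) - 1) / (2 * (Real.sqrt r : ℂ)))} ∧
    (∀ μ ∈ spectrum ℂ (J.map (algebraMap ℝ ℂ)),
      ‖μ‖ = |r - 1| / (2 * Real.sqrt r)) ∧
    (|r - 1| / (2 * Real.sqrt r) < 1 ↔ r₀⁻¹ < r ∧ r < r₀) ∧
    (|r - 1| / (2 * Real.sqrt r) = 1 ↔ r = r₀ ∨ r = r₀⁻¹) ∧
    (1 < |r - 1| / (2 * Real.sqrt r) ↔ r < r₀⁻¹ ∨ r₀ < r) ∧
    (|r - 1| / (2 * Real.sqrt r) = 1 ↔ r ^ 2 - 6 * r + 1 = 0) := by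
  have hrne : r ≠ 0 := hr.ne'
  set s := Real.sqrt r with hs
  have hs0 : 0 < s := Real.sqrt_pos.mpr hr
  have hs2 : s ^ 2 = r := Real.sq_sqrt hr.le
  have h2s : (0:ℝ) < 2 * s := by positivity
  have ht0 : (0:ℝ) < Real.sqrt 2 := Real.sqrt_pos.mpr (by norm_num)
  have ht2 : Real.sqrt 2 ^ 2 = 2 := Real.sq_sqrt (by norm_num)
  have hinv : r₀⁻¹ = 3 - 2 * Real.sqrt 2 := by
    have h1 : r₀ * (3 - 2 * Real.sqrt 2) = 1 := by rw [hr₀]; nlinarith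
    exact inv_eq_of_mul_eq_one_right h1
  -- charpoly
  have hcp : J.charpoly = Polynomial.X ^ 2 + Polynomial.C ((r - 1) ^ 2 / (4 * r)) := by
    have hab : (1 - r) / (2 * r) * ((r - 1) / 2) = -((r - 1) ^ 2 / (4 * r)) := by
      field_simp; ring
    rw [Matrix.charpoly, Matrix.det_fin_two,
        Matrix.charmatrix_apply_eq, Matrix.charmatrix_apply_eq,
        Matrix.charmatrix_apply_ne _ _ _ (by decide),
        Matrix.charmatrix_apply_ne _ _ _ (by decide), hJ,
        show (!![0, (1 - r) / (2 * r); (r - 1) / 2, 0] : Matrix (Fin 2) (Fin 2) ℝ) 0 0 = 0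
          from rfl,
        show (!![0, (1 - r) / (2 * r); (r - 1) / 2, 0] : Matrix (Fin 2) (Fin 2) ℝ) 1 1 = 0
          from rfl,
        show (!![0, (1 - r) / (2 * r); (r - 1) / 2, 0] : Matrix (Fin 2) (Fin 2) ℝ) 0 1 =
          (1 - r) / (2 * r) from rfl,
        show (!![0, (1 - r) / (2 * r); (r - 1) / 2, 0] : Matrix (Fin 2) (Fin 2) ℝ) 1 0 =
          (r - 1) / 2 from rfl]
    rw [show ((Polynomial.X - Polynomial.C (0:ℝ)) * (Polynomial.X - Polynomial.C 0) -
        -Polynomial.C ((1 - r) / (2 * r)) * -Polynomial.C ((r - 1) / 2)) =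
        Polynomial.X ^ 2 - Polynomial.C ((1 - r) / (2 * r) * ((r - 1) / 2)) by
      rw [Polynomial.C_0, sub_zero, neg_mul_neg, ← Polynomial.C_mul]; ring]
    rw [hab, map_neg, sub_neg_eq_add]
  -- spectrum
  have hrC : ((r:ℝ) : ℂ) ≠ 0 := by exact_mod_cast hrne
  have hsC : ((s:ℝ) : ℂ) ≠ 0 := by exact_mod_cast hs0.ne'
  have hsC2 : ((s:ℝ) : ℂ) ^ 2 = (r : ℂ) := by exact_mod_cast hs2
  set c : ℂ := Complex.I * ((r : ℂ) - 1) / (2 * (s : ℂ)) with hc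
  have hc2 : c ^ 2 = (((1 - r) / (2 * r) : ℝ) : ℂ) * (((r - 1) / 2 : ℝ) : ℂ) := by
    rw [hc]
    push_cast
    rw [div_pow, show (Complex.I * ((r:ℂ) - 1)) ^ 2 = Complex.I ^ 2 * ((r:ℂ) - 1) ^ 2 by ring,
      Complex.I_sq, show (2 * (s:ℂ)) ^ 2 = 4 * ((s:ℂ)) ^ 2 by ring, hsC2]
    field_simp
    ring
  have hspec : ∀ μ : ℂ, μ ∈ spectrum ℂ (J.map (algebraMap ℝ ℂ)) ↔ (μ = c ∨ μ = -c) := by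
    intro μ
    rw [spectrum.mem_iff, Matrix.isUnit_iff_isUnit_det, isUnit_iff_ne_zero, not_not]
    have hmat : algebraMap ℂ (Matrix (Fin 2) (Fin 2) ℂ) μ - J.map (algebraMap ℝ ℂ) =
        !![μ, -(((1 - r) / (2 * r) : ℝ) : ℂ); -(((r - 1) / 2 : ℝ) : ℂ), μ] := by
      rw [hJ]
      ext i j
      fin_cases i <;> fin_cases j <;>
        simp [Matrix.algebraMap_matrix_apply, Matrix.map_apply, Complex.coe_algebraMap]
    rw [hmat, Matrix.det_fin_two_of]
    rw [show μ * μ - -(((1 - r) / (2 * r) : ℝ) : ℂ) * -(((r - 1) / 2 : ℝ) : ℂ) =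
        μ ^ 2 - (((1 - r) / (2 * r) : ℝ) : ℂ) * (((r - 1) / 2 : ℝ) : ℂ) by ring, ← hc2]
    rw [show μ ^ 2 - c ^ 2 = (μ - c) * (μ + c) by ring, mul_eq_zero, sub_eq_zero,
      add_eq_zero_iff_eq_neg]
  have hspeq : spectrum ℂ (J.map (algebraMap ℝ ℂ)) = ({c, -c} : Set ℂ) := by
    ext μ
    rw [hspec μ]
    simp [Set.mem_insert_iff]
  have habs : ‖c‖ = |r - 1| / (2 * s) := by
    rw [hc, norm_div, norm_mul, norm_mul, Complex.norm_I, one_mul,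
      show ((r:ℂ) - 1) = (((r - 1 : ℝ)) : ℂ) by push_cast; ring,
      Complex.norm_real, Complex.norm_two, Complex.norm_real, Real.norm_eq_abs, Real.norm_eq_abs, abs_of_pos hs0]
  refine ⟨hcp, hspeq, ?_, ?_, ?_, ?_, ?_⟩
  · intro μ hμ
    rw [hspeq] at hμ
    rcases hμ with rfl | hμ
    · exact habs
    · rw [Set.mem_singleton_iff] at hμ
      subst hμ
      rw [norm_neg]
      exact habs
  · rw [div_lt_one h2s, tullock_abs_lt r s hr hs0 hs2, tullock_quad_lt, hinv, hr₀]
  · rw [div_eq_one_iff_eq h2s.ne', tullock_abs_eq r s hr hs0 hs2, tullock_quad_eq, hinv, hr₀]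
  · rw [one_lt_div h2s, tullock_abs_gt r s hr hs0 hs2, tullock_quad_gt, hinv, hr₀]
  · rw [div_eq_one_iff_eq h2s.ne', tullock_abs_eq r s hr hs0 hs2]
end
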